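/- arXiv:2402.01111 — 5 statements merged into one kernel-verified Lean document; each statement's English description precedes it below -/
import Mathlib

section
/- Let d and m be positive integers and let 𝒳 be a finite nonempty subset of (Δ^d)^m, i.e., each x ∈ 𝒳 is a vector (x_i)_{i=1}^{dm} in ℝ^{dm} whose m consecutive blocks of length d are probability vectors (nonnegative entries summing to 1). Then there exists y = (y_i)_{i=1}^{dm} in the convex hull of 𝒳 such that for every x ∈ 𝒳, ∑_{i=1}^{dm} x_i / y_i ≤ m·d, where any term with x_i = 0 is interpreted as 0 (in particular y_i > 0 whenever x_i > 0 for some x ∈ 𝒳 appearing in the sum). -/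
open Set Filter Topology

lemma aux_deriv_nonpos {g : ℝ → ℝ} {D : ℝ} (h : HasDerivAt g D 0)
    (hle : ∀ t ∈ Set.Ioc (0:ℝ) 1, g t ≤ g 0) : D ≤ 0 := by
  have h' : HasDerivWithinAt g D (Set.Ioc 0 1) 0 := h.hasDerivWithinAt
  have hnot : (0:ℝ) ∉ Set.Ioc (0:ℝ) 1 := by simp
  have htend := (hasDerivWithinAt_iff_tendsto_slope' hnot).1 h'
  haveI : (𝓝[Set.Ioc (0:ℝ) 1] 0).NeBot := by
    rw [← mem_closure_iff_nhdsWithin_neBot, closure_Ioc (one_ne_zero).symm]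
    exact ⟨le_refl 0, zero_le_one⟩
  refine le_of_tendsto htend ?_
  filter_upwards [self_mem_nhdsWithin] with t ht
  have hslope : slope g 0 t = (g t - g 0) / t := by
    simp [slope_def_field, div_eq_div_iff]
  rw [hslope]
  exact div_nonpos_of_nonpos_of_nonneg (by linarith [hle t ht]) ht.1.le

/-- (Experimental-design lemma.) Let `𝒳` be a finite nonempty family of
vectors in `(Δ^d)^m`, i.e. each `x ∈ 𝒳` consists of `m` blocks of length `d`, each block a
probability vector. Then there is `y` in the convex hull of `𝒳` such that
`∑_{i,j} x i j / y i j ≤ m·d` for every `x ∈ 𝒳` (terms with zero numerator count as `0`;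
moreover `y i j > 0` whenever some `x ∈ 𝒳` has `x i j > 0`). -/
theorem stmt1 (d m : ℕ) (hd : 0 < d) (hm : 0 < m)
    (X : Finset (Fin m → Fin d → ℝ)) (hX : X.Nonempty)
    (hsimplex : ∀ x ∈ X, (∀ i j, 0 ≤ x i j) ∧ ∀ i, ∑ j, x i j = 1) :
    ∃ y ∈ convexHull ℝ (X : Set (Fin m → Fin d → ℝ)),
      (∀ i j, (∃ x ∈ X, 0 < x i j) → 0 < y i j) ∧
      ∀ x ∈ X, ∑ i, ∑ j, x i j / y i j ≤ (m : ℝ) * d := by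
  classical
  set K : Set (Fin m → Fin d → ℝ) := convexHull ℝ (X : Set (Fin m → Fin d → ℝ)) with hK
  set S : Finset (Fin m × Fin d) :=
    Finset.univ.filter (fun p => ∃ x ∈ X, 0 < x p.1 p.2) with hSdef
  set f : (Fin m → Fin d → ℝ) → ℝ := fun z => ∏ p ∈ S, z p.1 p.2 with hf
  -- nonneg entries on K
  have hKnn : ∀ z ∈ K, ∀ i j, 0 ≤ z i j := by
    have hsub : K ⊆ {z : Fin m → Fin d → ℝ | ∀ i j, 0 ≤ z i j} := by
      apply convexHull_min
      · intro x hx; exact (hsimplex x hx).1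
      · intro a ha b hb s t hs ht hst i j
        have := add_nonneg (mul_nonneg hs (ha i j)) (mul_nonneg ht (hb i j))
        simpa using this
    exact fun z hz => hsub hz
  -- compactness & maximizer
  have hcpt : IsCompact K := (X.finite_toSet).isCompact_convexHull (𝕜 := ℝ)
  obtain ⟨x₀, hx₀⟩ := hX
  have hKne : K.Nonempty := ⟨x₀, subset_convexHull ℝ _ hx₀⟩
  have hfc : Continuous f := by
    apply continuous_finset_prod
    intro p _
    exact (continuous_apply p.2).comp (continuous_apply p.1)
  obtain ⟨y, hyK, hymax⟩ := hcpt.exists_isMaxOn hKne hfc.continuousOn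
  -- the centroid
  have hcm : X.centerMass (fun _ => (1:ℝ)) id ∈ K :=
    Finset.centerMass_mem_convexHull X (fun _ _ => zero_le_one)
      (by simpa using Finset.card_pos.2 ⟨x₀, hx₀⟩) (fun i hi => hi)
  have hcmval : ∀ i j, X.centerMass (fun _ => (1:ℝ)) id i j
      = (X.card : ℝ)⁻¹ * ∑ x ∈ X, x i j := by
    intro i j
    simp [Finset.centerMass, Finset.sum_apply]
  have hcmpos : ∀ p ∈ S, 0 < X.centerMass (fun _ => (1:ℝ)) id p.1 p.2 := by
    intro p hp
    obtain ⟨x, hx, hxp⟩ := (Finset.mem_filter.1 hp).2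
    rw [hcmval]
    apply mul_pos
    · rw [inv_pos]; exact_mod_cast Finset.card_pos.2 ⟨x₀, hx₀⟩
    · exact Finset.sum_pos' (fun z hz => (hsimplex z hz).1 p.1 p.2) ⟨x, hx, hxp⟩
  have hfy_pos : 0 < f y := by
    have h1 : 0 < f (X.centerMass (fun _ => (1:ℝ)) id) :=
      Finset.prod_pos (fun p hp => hcmpos p hp)
    exact lt_of_lt_of_le h1 (hymax hcm)
  have hypos : ∀ p ∈ S, 0 < y p.1 p.2 := by
    intro p hp
    rcases lt_or_eq_of_le (hKnn y hyK p.1 p.2) with h | h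
    · exact h
    · exfalso
      have : f y = 0 := Finset.prod_eq_zero hp h.symm
      rw [this] at hfy_pos; exact lt_irrefl 0 hfy_pos
  refine ⟨y, hyK, ?_, ?_⟩
  · intro i j hij
    exact hypos (i, j) (Finset.mem_filter.2 ⟨Finset.mem_univ _, hij⟩)
  -- main bound
  intro x hxX
  -- first-order condition
  have hkey : ∑ p ∈ S, x p.1 p.2 / y p.1 p.2 ≤ (S.card : ℝ) := by
    set g : ℝ → ℝ := fun t => ∏ p ∈ S, (y p.1 p.2 + t * (x p.1 p.2 - y p.1 p.2)) with hg
    have hderiv : HasDerivAt g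
        (∑ p ∈ S, (∏ q ∈ S.erase p, y q.1 q.2) • (x p.1 p.2 - y p.1 p.2)) 0 := by
      have := HasDerivAt.fun_finsetProd (u := S)
        (f := fun p t => y p.1 p.2 + t * (x p.1 p.2 - y p.1 p.2))
        (f' := fun p => x p.1 p.2 - y p.1 p.2) (x := (0:ℝ))
        (fun p _ => by
          simpa using ((hasDerivAt_id (0:ℝ)).mul_const (x p.1 p.2 - y p.1 p.2)).const_add (y p.1 p.2))
      simpa using this
    have hle : ∀ t ∈ Set.Ioc (0:ℝ) 1, g t ≤ g 0 := by
      intro t ht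
      have hmem : (1 - t) • y + t • x ∈ K :=
        (convex_convexHull ℝ _) hyK (subset_convexHull ℝ _ hxX)
          (by linarith [ht.2]) ht.1.le (by ring)
      have h1 : g t = f ((1 - t) • y + t • x) := by
        apply Finset.prod_congr rfl
        intro p _
        simp only [Pi.add_apply, Pi.smul_apply, smul_eq_mul]
        ring
      have h2 : g 0 = f y := by
        apply Finset.prod_congr rfl; intro p _; ring
      rw [h1, h2]
      exact hymax hmem
    have hD := aux_deriv_nonpos hderiv hle
    -- rewrite derivative
    have hDrw : ∀ p ∈ S, (∏ q ∈ S.erase p, y q.1 q.2) • (x p.1 p.2 - y p.1 p.2)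
        = f y * (x p.1 p.2 / y p.1 p.2 - 1) := by
      intro p hp
      have hyp := hypos p hp
      have : f y = y p.1 p.2 * ∏ q ∈ S.erase p, y q.1 q.2 :=
        (Finset.mul_prod_erase S _ hp).symm
      rw [smul_eq_mul, this]
      field_simp
    rw [Finset.sum_congr rfl hDrw, ← Finset.mul_sum] at hD
    have hsum : ∑ p ∈ S, (x p.1 p.2 / y p.1 p.2 - 1) ≤ 0 := by
      by_contra hc
      push_neg at hc
      nlinarith
    have := Finset.sum_sub_distrib (f := fun p : Fin m × Fin d => x p.1 p.2 / y p.1 p.2)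
      (g := fun _ => (1:ℝ)) (s := S)
    simp only [Finset.sum_const, nsmul_eq_mul, mul_one] at this
    linarith [hsum, this.symm ▸ hsum]
  -- assemble
  have hsum_eq : ∑ i, ∑ j, x i j / y i j = ∑ p ∈ S, x p.1 p.2 / y p.1 p.2 := by
    rw [← Finset.sum_product']
    symm
    apply Finset.sum_subset (Finset.subset_univ S)
    intro p _ hp
    have hx0 : x p.1 p.2 = 0 := by
      rcases lt_or_eq_of_le ((hsimplex x hxX).1 p.1 p.2) with h | h
      · exact absurd (Finset.mem_filter.2 ⟨Finset.mem_univ _, ⟨x, hxX, h⟩⟩) hp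
      · exact h.symm
    simp [hx0]
  rw [hsum_eq]
  refine le_trans hkey ?_
  have : S.card ≤ m * d := by
    calc S.card ≤ Finset.univ.card := Finset.card_le_card (Finset.subset_univ S)
    _ = m * d := by simp [Finset.card_univ]
  exact_mod_cast this
end

section
/- Let P' and P'' be two transition kernels of an absorbing Markov game over state space 𝒮 ∪ {s†} with the same horizon H, such that P' is (1/H)-multiplicatively accurate to P''. Then for every Markov policy pair (μ,ν) and every (h,s,a,b) ∈ [H] × 𝒮 × 𝒜 × ℬ, the visitation probabilities satisfy (1/4)·V^{μ,ν}(1_{h,s,a,b}, P') ≤ V^{μ,ν}(1_{h,s,a,b}, P'') ≤ 3·V^{μ,ν}(1_{h,s,a,b}, P'). -/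
/-- Value-to-go of a Markov-policy pair `(μ, ν)` in a finite two-player zero-sum Markov
game with transition kernel `P` and reward `r`: `Vfuel P r μ ν n h s` is the expected sum
of the rewards collected in the `n` steps `h, h+1, …, h+n−1`, starting from state `s` at
step `h`, the two actions being drawn independently from `μ h s` and `ν h s`. -/
noncomputable def Vfuel {S A B : Type*} [Fintype S] [Fintype A] [Fintype B]
    (P : ℕ → S → A → B → S → ℝ) (r : ℕ → S → A → B → ℝ)
    (μ : ℕ → S → A → ℝ) (ν : ℕ → S → B → ℝ) : ℕ → ℕ → S → ℝ
  | 0, _, _ => 0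
  | n + 1, h, s =>
      ∑ a, ∑ b, μ h s a * ν h s b *
        (r h s a b + ∑ s', P h s a b s' * Vfuel P r μ ν n (h + 1) s')

/-- `val H P r μ ν s₁ = V^{μ,ν}(r, P)`: the expected total reward
`𝔼_{μ×ν}[∑_{h=1}^H r_h(s_h,a_h,b_h)]` over the horizon `H`, starting at `s₁` at step 1. -/
noncomputable def val {S A B : Type*} [Fintype S] [Fintype A] [Fintype B]
    (H : ℕ) (P : ℕ → S → A → B → S → ℝ) (r : ℕ → S → A → B → ℝ)
    (μ : ℕ → S → A → ℝ) (ν : ℕ → S → B → ℝ) (s₁ : S) : ℝ :=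
  Vfuel P r μ ν H 1 s₁

/-- `P` is a valid transition kernel over the steps `h ∈ [H] = {1, …, H}`. -/
def IsKernel {S A B : Type*} [Fintype S] (H : ℕ) (P : ℕ → S → A → B → S → ℝ) : Prop :=
  ∀ h ∈ Finset.Icc 1 H, ∀ s a b, (∀ s', 0 ≤ P h s a b s') ∧ ∑ s', P h s a b s' = 1

/-- `μ` is a valid Markov policy over the steps `h ∈ [H] = {1, …, H}`. -/
def IsPolicy {S A : Type*} [Fintype A] (H : ℕ) (μ : ℕ → S → A → ℝ) : Prop :=
  ∀ h ∈ Finset.Icc 1 H, ∀ s, (∀ a, 0 ≤ μ h s a) ∧ ∑ a, μ h s a = 1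

/-- The indicator reward `1_{h,s,a,b}`, equal to `1` at `(h,s,a,b)` and `0` elsewhere;
`val H P (ind h s a b) μ ν s₁` is the probability of visiting `(s,a,b)` at step `h`. -/
noncomputable def ind {S A B : Type*} [DecidableEq S] [DecidableEq A] [DecidableEq B]
    (h : ℕ) (s : S) (a : A) (b : B) : ℕ → S → A → B → ℝ :=
  fun h' s' a' b' => if h' = h ∧ s' = s ∧ a' = a ∧ b' = b then 1 else 0


section aux

variable {S A B : Type*} [Fintype S] [Fintype A] [Fintype B]
  [DecidableEq S] [DecidableEq A] [DecidableEq B]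

private lemma vfuel_succ (P : ℕ → S → A → B → S → ℝ) (r : ℕ → S → A → B → ℝ)
    (μ : ℕ → S → A → ℝ) (ν : ℕ → S → B → ℝ) (n h : ℕ) (s : S) :
    Vfuel P r μ ν (n+1) h s = ∑ a, ∑ b, μ h s a * ν h s b *
      (r h s a b + ∑ s', P h s a b s' * Vfuel P r μ ν n (h + 1) s') := rfl

/-- If the current step is already past `h`, the indicator value is `0`. -/
private lemma vfuel_gt (P : ℕ → S → A → B → S → ℝ)
    (μ : ℕ → S → A → ℝ) (ν : ℕ → S → B → ℝ) (h : ℕ) (s : S) (a : A) (b : B) :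
    ∀ n h₀ (s₀ : S), h < h₀ → Vfuel P (ind h s a b) μ ν n h₀ s₀ = 0 := by
  intro n
  induction n with
  | zero => intro h₀ s₀ _; rfl
  | succ n ih =>
    intro h₀ s₀ hlt
    rw [vfuel_succ]
    refine Finset.sum_eq_zero fun a' _ => Finset.sum_eq_zero fun b' _ => ?_
    have h1 : ind h s a b h₀ s₀ a' b' = 0 := by
      simp [ind, hlt.ne']
    have h2 : ∀ s' : S, Vfuel P (ind h s a b) μ ν n (h₀+1) s' = 0 :=
      fun s' => ih (h₀+1) s' (Nat.lt_succ_of_lt hlt)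
    simp [h1, h2]

/-- From an absorbing state, transitions to proper states have probability `0`. -/
private lemma kernel_none {H : ℕ} (P : ℕ → Option S → A → B → Option S → ℝ)
    (hP : IsKernel H P) (habs : ∀ h ∈ Finset.Icc 1 H, ∀ a b, P h none a b none = 1)
    {h₀ : ℕ} (hh : h₀ ∈ Finset.Icc 1 H) (a : A) (b : B) (t : S) :
    P h₀ none a b (some t) = 0 := by
  have h1 := (hP h₀ hh none a b).2
  have h0 := (hP h₀ hh none a b).1
  rw [Fintype.sum_option, habs h₀ hh a b] at h1
  have hz : ∑ t : S, P h₀ none a b (some t) = 0 := by linarith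
  exact (Finset.sum_eq_zero_iff_of_nonneg (fun t _ => h0 (some t))).mp hz t
    (Finset.mem_univ t)

/-- Starting from the absorbing state, the indicator value (for a proper state) is `0`. -/
private lemma vfuel_none {H : ℕ} (P : ℕ → Option S → A → B → Option S → ℝ)
    (hP : IsKernel H P) (habs : ∀ h ∈ Finset.Icc 1 H, ∀ a b, P h none a b none = 1)
    (μ : ℕ → Option S → A → ℝ) (ν : ℕ → Option S → B → ℝ)
    (h : ℕ) (s : S) (a : A) (b : B) :
    ∀ n h₀, 1 ≤ h₀ → h₀ + n ≤ H + 1 →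
      Vfuel P (ind h (some s) a b) μ ν n h₀ (none : Option S) = 0 := by
  intro n
  induction n with
  | zero => intro h₀ _ _; rfl
  | succ n ih =>
    intro h₀ h1 h2
    have hmem : h₀ ∈ Finset.Icc 1 H := Finset.mem_Icc.mpr ⟨h1, by omega⟩
    rw [vfuel_succ]
    refine Finset.sum_eq_zero fun a' _ => Finset.sum_eq_zero fun b' _ => ?_
    have hind : ind h (some s) a b h₀ (none : Option S) a' b' = 0 := by simp [ind]
    have hsum : ∑ s', P h₀ none a' b' s' *
        Vfuel P (ind h (some s) a b) μ ν n (h₀+1) s' = 0 := by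
      rw [Fintype.sum_option]
      rw [ih (h₀+1) (by omega) (by omega)]
      rw [Finset.sum_eq_zero fun t _ => by
        rw [kernel_none P hP habs hmem a' b' t, zero_mul]]
      ring
    rw [hind, hsum]
    ring

/-- Nonnegativity of values for nonnegative rewards. -/
private lemma vfuel_nonneg {H : ℕ} (P : ℕ → S → A → B → S → ℝ)
    (hP : IsKernel H P) (μ : ℕ → S → A → ℝ) (ν : ℕ → S → B → ℝ)
    (hμ : IsPolicy H μ) (hν : IsPolicy H ν)
    (r : ℕ → S → A → B → ℝ) (hr : ∀ h s a b, 0 ≤ r h s a b) :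
    ∀ n h₀ (s₀ : S), 1 ≤ h₀ → h₀ + n ≤ H + 1 → 0 ≤ Vfuel P r μ ν n h₀ s₀ := by
  intro n
  induction n with
  | zero => intro h₀ s₀ _ _; exact le_refl 0
  | succ n ih =>
    intro h₀ s₀ h1 h2
    have hmem : h₀ ∈ Finset.Icc 1 H := Finset.mem_Icc.mpr ⟨h1, by omega⟩
    rw [vfuel_succ]
    refine Finset.sum_nonneg fun a' _ => Finset.sum_nonneg fun b' _ => ?_
    have hμ0 := (hμ h₀ hmem s₀).1 a'
    have hν0 := (hν h₀ hmem s₀).1 b'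
    refine mul_nonneg (mul_nonneg hμ0 hν0) (add_nonneg (hr _ _ _ _) ?_)
    exact Finset.sum_nonneg fun s' _ => mul_nonneg ((hP h₀ hmem s₀ a' b').1 s')
      (ih (h₀+1) s' (by omega) (by omega))

private lemma ind_nonneg (h : ℕ) (s : S) (a : A) (b : B) :
    ∀ h' (s' : S) a' b', 0 ≤ ind h s a b h' s' a' b' := by
  intro h' s' a' b'
  unfold ind
  split <;> norm_num

/-- Upper comparison: if `Q ≤ c·P` on proper transitions then values compare with `c^(h-h₀)`. -/
private lemma vfuel_le_aux {H : ℕ} (P Q : ℕ → Option S → A → B → Option S → ℝ)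
    (hP : IsKernel H P) (hQ : IsKernel H Q)
    (habsP : ∀ h ∈ Finset.Icc 1 H, ∀ a b, P h none a b none = 1)
    (habsQ : ∀ h ∈ Finset.Icc 1 H, ∀ a b, Q h none a b none = 1)
    (μ : ℕ → Option S → A → ℝ) (ν : ℕ → Option S → B → ℝ)
    (hμ : IsPolicy H μ) (hν : IsPolicy H ν)
    (h : ℕ) (s : S) (a : A) (b : B) (c : ℝ) (hc : 1 ≤ c)
    (hPQ : ∀ h' ∈ Finset.Icc 1 H, ∀ (t : S) (a' : A) (b' : B) (t' : S),
      Q h' (some t) a' b' (some t') ≤ c * P h' (some t) a' b' (some t')) :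
    ∀ n h₀ (s₀ : Option S), 1 ≤ h₀ → h₀ + n ≤ H + 1 →
      Vfuel Q (ind h (some s) a b) μ ν n h₀ s₀
        ≤ c ^ (h - h₀) * Vfuel P (ind h (some s) a b) μ ν n h₀ s₀ := by
  intro n
  induction n with
  | zero => intro h₀ s₀ _ _; show (0:ℝ) ≤ c ^ (h - h₀) * 0; simp
  | succ n ih =>
    intro h₀ s₀ h1 h2
    have hmem : h₀ ∈ Finset.Icc 1 H := Finset.mem_Icc.mpr ⟨h1, by omega⟩
    rcases lt_trichotomy h h₀ with hlt | rfl | hgt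
    · rw [vfuel_gt Q μ ν h (some s) a b (n+1) h₀ s₀ hlt,
        vfuel_gt P μ ν h (some s) a b (n+1) h₀ s₀ hlt]
      simp
    · -- h₀ = h : the two values are equal
      have eq2 : ∀ R : ℕ → Option S → A → B → Option S → ℝ,
          Vfuel R (ind h (some s) a b) μ ν (n+1) h s₀
            = ∑ a', ∑ b', μ h s₀ a' * ν h s₀ b' * ind h (some s) a b h s₀ a' b' := by
        intro R
        rw [vfuel_succ]
        refine Finset.sum_congr rfl fun a' _ => Finset.sum_congr rfl fun b' _ => ?_
        rw [Finset.sum_eq_zero fun s' _ => by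
          rw [vfuel_gt R μ ν h (some s) a b n (h+1) s' (Nat.lt_succ_self h), mul_zero]]
        ring
      rw [eq2 Q, eq2 P, Nat.sub_self, pow_zero, one_mul]
    · -- h₀ < h
      match s₀ with
      | none =>
        rw [vfuel_none Q hQ habsQ μ ν h s a b (n+1) h₀ h1 h2,
          vfuel_none P hP habsP μ ν h s a b (n+1) h₀ h1 h2]
        simp
      | some t =>
        rw [vfuel_succ, vfuel_succ, Finset.mul_sum]
        refine Finset.sum_le_sum fun a' _ => ?_
        rw [Finset.mul_sum]
        refine Finset.sum_le_sum fun b' _ => ?_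
        have hind : ind h (some s) a b h₀ (some t) a' b' = 0 := by
          simp [ind, hgt.ne]
        have hμ0 := (hμ h₀ hmem (some t)).1 a'
        have hν0 := (hν h₀ hmem (some t)).1 b'
        have hpow : c ^ (h - h₀) = c ^ (h - (h₀+1)) * c := by
          have : h - h₀ = (h - (h₀+1)) + 1 := by omega
          rw [this, pow_succ]
        have key : ∑ s', Q h₀ (some t) a' b' s' *
              Vfuel Q (ind h (some s) a b) μ ν n (h₀+1) s'
            ≤ c ^ (h - h₀) * ∑ s', P h₀ (some t) a' b' s' *
              Vfuel P (ind h (some s) a b) μ ν n (h₀+1) s' := by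
          rw [Fintype.sum_option, Fintype.sum_option,
            vfuel_none Q hQ habsQ μ ν h s a b n (h₀+1) (by omega) (by omega),
            vfuel_none P hP habsP μ ν h s a b n (h₀+1) (by omega) (by omega),
            mul_zero, mul_zero, zero_add, zero_add, Finset.mul_sum]
          refine Finset.sum_le_sum fun t' _ => ?_
          have hQnn : 0 ≤ Vfuel Q (ind h (some s) a b) μ ν n (h₀+1) (some t') :=
            vfuel_nonneg Q hQ μ ν hμ hν _ (ind_nonneg h (some s) a b) n (h₀+1)
              (some t') (by omega) (by omega)
          have hPnn : 0 ≤ Vfuel P (ind h (some s) a b) μ ν n (h₀+1) (some t') :=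
            vfuel_nonneg P hP μ ν hμ hν _ (ind_nonneg h (some s) a b) n (h₀+1)
              (some t') (by omega) (by omega)
          have hPk := (hP h₀ hmem (some t) a' b').1 (some t')
          calc Q h₀ (some t) a' b' (some t') *
                Vfuel Q (ind h (some s) a b) μ ν n (h₀+1) (some t')
              ≤ (c * P h₀ (some t) a' b' (some t')) *
                Vfuel Q (ind h (some s) a b) μ ν n (h₀+1) (some t') :=
                mul_le_mul_of_nonneg_right (hPQ h₀ hmem t a' b' t') hQnn
            _ ≤ (c * P h₀ (some t) a' b' (some t')) *
                (c ^ (h - (h₀+1)) * Vfuel P (ind h (some s) a b) μ ν n (h₀+1) (some t')) := by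
                refine mul_le_mul_of_nonneg_left ?_
                  (mul_nonneg (by linarith) hPk)
                exact ih (h₀+1) (some t') (by omega) (by omega)
            _ = c ^ (h - h₀) * (P h₀ (some t) a' b' (some t') *
                Vfuel P (ind h (some s) a b) μ ν n (h₀+1) (some t')) := by
                rw [hpow]; ring
        calc μ h₀ (some t) a' * ν h₀ (some t) b' *
              (ind h (some s) a b h₀ (some t) a' b' + ∑ s', Q h₀ (some t) a' b' s' *
                Vfuel Q (ind h (some s) a b) μ ν n (h₀+1) s')
            = μ h₀ (some t) a' * ν h₀ (some t) b' * (∑ s', Q h₀ (some t) a' b' s' *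
                Vfuel Q (ind h (some s) a b) μ ν n (h₀+1) s') := by rw [hind, zero_add]
          _ ≤ μ h₀ (some t) a' * ν h₀ (some t) b' *
              (c ^ (h - h₀) * ∑ s', P h₀ (some t) a' b' s' *
                Vfuel P (ind h (some s) a b) μ ν n (h₀+1) s') :=
              mul_le_mul_of_nonneg_left key (mul_nonneg hμ0 hν0)
          _ = c ^ (h - h₀) * (μ h₀ (some t) a' * ν h₀ (some t) b' *
              (ind h (some s) a b h₀ (some t) a' b' + ∑ s', P h₀ (some t) a' b' s' *
                Vfuel P (ind h (some s) a b) μ ν n (h₀+1) s')) := by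
              rw [hind, zero_add]; ring

end aux

section aux2

variable {S A B : Type*} [Fintype S] [Fintype A] [Fintype B]
  [DecidableEq S] [DecidableEq A] [DecidableEq B]

/-- Lower comparison: if `c·P ≤ Q` on proper transitions (`0 ≤ c`) then
`c^(h-h₀) · V_P ≤ V_Q`. -/
private lemma vfuel_ge_aux {H : ℕ} (P Q : ℕ → Option S → A → B → Option S → ℝ)
    (hP : IsKernel H P) (hQ : IsKernel H Q)
    (habsP : ∀ h ∈ Finset.Icc 1 H, ∀ a b, P h none a b none = 1)
    (habsQ : ∀ h ∈ Finset.Icc 1 H, ∀ a b, Q h none a b none = 1)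
    (μ : ℕ → Option S → A → ℝ) (ν : ℕ → Option S → B → ℝ)
    (hμ : IsPolicy H μ) (hν : IsPolicy H ν)
    (h : ℕ) (s : S) (a : A) (b : B) (c : ℝ) (hc : 0 ≤ c)
    (hPQ : ∀ h' ∈ Finset.Icc 1 H, ∀ (t : S) (a' : A) (b' : B) (t' : S),
      c * P h' (some t) a' b' (some t') ≤ Q h' (some t) a' b' (some t')) :
    ∀ n h₀ (s₀ : Option S), 1 ≤ h₀ → h₀ + n ≤ H + 1 →
      c ^ (h - h₀) * Vfuel P (ind h (some s) a b) μ ν n h₀ s₀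
        ≤ Vfuel Q (ind h (some s) a b) μ ν n h₀ s₀ := by
  intro n
  induction n with
  | zero => intro h₀ s₀ _ _; show c ^ (h - h₀) * 0 ≤ (0:ℝ); simp
  | succ n ih =>
    intro h₀ s₀ h1 h2
    have hmem : h₀ ∈ Finset.Icc 1 H := Finset.mem_Icc.mpr ⟨h1, by omega⟩
    rcases lt_trichotomy h h₀ with hlt | rfl | hgt
    · rw [vfuel_gt Q μ ν h (some s) a b (n+1) h₀ s₀ hlt,
        vfuel_gt P μ ν h (some s) a b (n+1) h₀ s₀ hlt]
      simp
    · have eq2 : ∀ R : ℕ → Option S → A → B → Option S → ℝ,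
          Vfuel R (ind h (some s) a b) μ ν (n+1) h s₀
            = ∑ a', ∑ b', μ h s₀ a' * ν h s₀ b' * ind h (some s) a b h s₀ a' b' := by
        intro R
        rw [vfuel_succ]
        refine Finset.sum_congr rfl fun a' _ => Finset.sum_congr rfl fun b' _ => ?_
        rw [Finset.sum_eq_zero fun s' _ => by
          rw [vfuel_gt R μ ν h (some s) a b n (h+1) s' (Nat.lt_succ_self h), mul_zero]]
        ring
      rw [eq2 Q, eq2 P, Nat.sub_self, pow_zero, one_mul]
    · match s₀ with
      | none =>
        rw [vfuel_none Q hQ habsQ μ ν h s a b (n+1) h₀ h1 h2,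
          vfuel_none P hP habsP μ ν h s a b (n+1) h₀ h1 h2]
        simp
      | some t =>
        rw [vfuel_succ, vfuel_succ, Finset.mul_sum]
        refine Finset.sum_le_sum fun a' _ => ?_
        rw [Finset.mul_sum]
        refine Finset.sum_le_sum fun b' _ => ?_
        have hind : ind h (some s) a b h₀ (some t) a' b' = 0 := by
          simp [ind, hgt.ne]
        have hμ0 := (hμ h₀ hmem (some t)).1 a'
        have hν0 := (hν h₀ hmem (some t)).1 b'
        have hpow : c ^ (h - h₀) = c ^ (h - (h₀+1)) * c := by
          have : h - h₀ = (h - (h₀+1)) + 1 := by omega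
          rw [this, pow_succ]
        have key : c ^ (h - h₀) * ∑ s', P h₀ (some t) a' b' s' *
              Vfuel P (ind h (some s) a b) μ ν n (h₀+1) s'
            ≤ ∑ s', Q h₀ (some t) a' b' s' *
              Vfuel Q (ind h (some s) a b) μ ν n (h₀+1) s' := by
          rw [Fintype.sum_option, Fintype.sum_option,
            vfuel_none Q hQ habsQ μ ν h s a b n (h₀+1) (by omega) (by omega),
            vfuel_none P hP habsP μ ν h s a b n (h₀+1) (by omega) (by omega),
            mul_zero, mul_zero, zero_add, zero_add, Finset.mul_sum]
          refine Finset.sum_le_sum fun t' _ => ?_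
          have hQnn : 0 ≤ Vfuel Q (ind h (some s) a b) μ ν n (h₀+1) (some t') :=
            vfuel_nonneg Q hQ μ ν hμ hν _ (ind_nonneg h (some s) a b) n (h₀+1)
              (some t') (by omega) (by omega)
          have hPk := (hP h₀ hmem (some t) a' b').1 (some t')
          calc c ^ (h - h₀) * (P h₀ (some t) a' b' (some t') *
                Vfuel P (ind h (some s) a b) μ ν n (h₀+1) (some t'))
              = (c * P h₀ (some t) a' b' (some t')) *
                (c ^ (h - (h₀+1)) * Vfuel P (ind h (some s) a b) μ ν n (h₀+1) (some t')) := by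
                rw [hpow]; ring
            _ ≤ (c * P h₀ (some t) a' b' (some t')) *
                Vfuel Q (ind h (some s) a b) μ ν n (h₀+1) (some t') :=
                mul_le_mul_of_nonneg_left (ih (h₀+1) (some t') (by omega) (by omega))
                  (mul_nonneg hc hPk)
            _ ≤ Q h₀ (some t) a' b' (some t') *
                Vfuel Q (ind h (some s) a b) μ ν n (h₀+1) (some t') :=
                mul_le_mul_of_nonneg_right (hPQ h₀ hmem t a' b' t') hQnn
        calc c ^ (h - h₀) * (μ h₀ (some t) a' * ν h₀ (some t) b' *
              (ind h (some s) a b h₀ (some t) a' b' + ∑ s', P h₀ (some t) a' b' s' *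
                Vfuel P (ind h (some s) a b) μ ν n (h₀+1) s'))
            = μ h₀ (some t) a' * ν h₀ (some t) b' *
              (c ^ (h - h₀) * ∑ s', P h₀ (some t) a' b' s' *
                Vfuel P (ind h (some s) a b) μ ν n (h₀+1) s') := by
              rw [hind, zero_add]; ring
          _ ≤ μ h₀ (some t) a' * ν h₀ (some t) b' *
              (∑ s', Q h₀ (some t) a' b' s' *
                Vfuel Q (ind h (some s) a b) μ ν n (h₀+1) s') :=
              mul_le_mul_of_nonneg_left key (mul_nonneg hμ0 hν0)
          _ = μ h₀ (some t) a' * ν h₀ (some t) b' *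
              (ind h (some s) a b h₀ (some t) a' b' + ∑ s', Q h₀ (some t) a' b' s' *
                Vfuel Q (ind h (some s) a b) μ ν n (h₀+1) s') := by
              rw [hind, zero_add]

end aux2

section numeric

private lemma upper_const (H k : ℕ) (hH : 1 ≤ H) (hk : k ≤ H - 1) :
    (1 + 1 / (H:ℝ)) ^ k ≤ 3 := by
  have hHpos : (0:ℝ) < H := by exact_mod_cast hH
  have h1 : (1 + 1/(H:ℝ)) ≤ Real.exp (1/H) := by
    have := Real.add_one_le_exp (1/(H:ℝ)); linarith
  have h2 : (1 + 1/(H:ℝ))^k ≤ Real.exp (1/H) ^ k :=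
    pow_le_pow_left₀ (by positivity) h1 k
  have h3 : Real.exp (1/(H:ℝ)) ^ k = Real.exp (k * (1/H)) := by
    rw [Real.exp_nat_mul]
  have h4 : (k:ℝ) * (1/H) ≤ 1 := by
    rw [mul_one_div, div_le_one hHpos]
    exact_mod_cast le_trans hk (Nat.sub_le H 1)
  have h5 : Real.exp ((k:ℝ) * (1/H)) ≤ Real.exp 1 := Real.exp_le_exp.mpr h4
  have h6 := Real.exp_one_lt_d9
  calc (1+1/(H:ℝ))^k ≤ Real.exp ((k:ℝ) * (1/H)) := by rw [← h3]; exact h2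
    _ ≤ Real.exp 1 := h5
    _ ≤ 3 := by norm_num at h6 ⊢; linarith

private lemma lower_const (H k : ℕ) (hH : 1 ≤ H) (hk : k ≤ H - 1) :
    (1/4 : ℝ) ≤ (1 - 1/(H:ℝ)) ^ k := by
  rcases Nat.eq_zero_or_pos k with rfl | hk1
  · norm_num
  have hH2 : 2 ≤ H := by omega
  have hHpos : (0:ℝ) < H := by positivity
  have hHR : (2:ℝ) ≤ H := by exact_mod_cast hH2
  have hm : (0:ℝ) < (H:ℝ) - 1 := by linarith
  have hbase0 : (0:ℝ) ≤ 1 - 1/(H:ℝ) := by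
    rw [sub_nonneg, div_le_one hHpos]; linarith
  have hbase1 : (1:ℝ) - 1/(H:ℝ) ≤ 1 := by
    have : (0:ℝ) ≤ 1/(H:ℝ) := by positivity
    linarith
  -- exp(-(1/(H-1))) ≤ 1 - 1/H
  have hexp : Real.exp (-(1/((H:ℝ)-1))) ≤ 1 - 1/(H:ℝ) := by
    have h1 : 1/((H:ℝ)-1) + 1 ≤ Real.exp (1/((H:ℝ)-1)) := Real.add_one_le_exp _
    have h2 : (H:ℝ)/((H:ℝ)-1) ≤ Real.exp (1/((H:ℝ)-1)) := by
      have : (H:ℝ)/((H:ℝ)-1) = 1/((H:ℝ)-1) + 1 := by field_simp; ring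
      linarith
    have hpos : (0:ℝ) < (H:ℝ)/((H:ℝ)-1) := by positivity
    have h3 : (1 - 1/(H:ℝ)) * ((H:ℝ)/((H:ℝ)-1)) = 1 := by field_simp
    have h4 := mul_le_mul_of_nonneg_left h2 hbase0
    rw [Real.exp_neg, inv_le_iff_one_le_mul₀ (Real.exp_pos _)]
    linarith
  have hanti : (1 - 1/(H:ℝ)) ^ (H-1) ≤ (1 - 1/(H:ℝ)) ^ k :=
    pow_le_pow_of_le_one hbase0 hbase1 hk
  have hcast : ((H-1 : ℕ) : ℝ) = (H:ℝ) - 1 := by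
    push_cast [Nat.cast_sub hH]; ring
  have hexp2 : Real.exp (-1) ≤ (1 - 1/(H:ℝ)) ^ (H-1) := by
    calc Real.exp (-1) = Real.exp (((H-1:ℕ):ℝ) * (-(1/((H:ℝ)-1)))) := by
          rw [hcast]; congr 1; field_simp
      _ = Real.exp (-(1/((H:ℝ)-1))) ^ (H-1) := Real.exp_nat_mul _ _
      _ ≤ (1 - 1/(H:ℝ)) ^ (H-1) :=
          pow_le_pow_left₀ (le_of_lt (Real.exp_pos _)) hexp _
  have hq : (1/4:ℝ) ≤ Real.exp (-1) := by
    rw [Real.exp_neg, inv_eq_one_div, div_le_div_iff₀ (by norm_num) (Real.exp_pos 1)]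
    have := Real.exp_one_lt_d9
    norm_num at this ⊢
    linarith
  linarith

end numeric

/-- If, on an absorbing Markov game over `𝒮 ∪ {s†}` (here `Option S`,
with `none` the absorbing state `s†`), the kernel `P'` is `(1/H)`-multiplicatively
accurate to `P''`, then for every Markov policy pair and every `(h,s,a,b)` with
`h ∈ [H]` and `s ∈ 𝒮`, the visitation probabilities satisfy
`(1/4)·V^{μ,ν}(1_{h,s,a,b},P') ≤ V^{μ,ν}(1_{h,s,a,b},P'') ≤ 3·V^{μ,ν}(1_{h,s,a,b},P')`. -/
theorem stmt2 {S A B : Type*} [Fintype S] [Fintype A] [Fintype B]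
    [DecidableEq S] [DecidableEq A] [DecidableEq B]
    (H : ℕ) (hH : 1 ≤ H)
    (P' P'' : ℕ → Option S → A → B → Option S → ℝ)
    (hP' : IsKernel H P') (hP'' : IsKernel H P'')
    (habs' : ∀ h ∈ Finset.Icc 1 H, ∀ a b, P' h none a b none = 1)
    (habs'' : ∀ h ∈ Finset.Icc 1 H, ∀ a b, P'' h none a b none = 1)
    (hacc : ∀ h ∈ Finset.Icc 1 H, ∀ (s : S) (a : A) (b : B) (s' : S),
      (1 - 1 / (H : ℝ)) * P' h (some s) a b (some s') ≤ P'' h (some s) a b (some s') ∧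
        P'' h (some s) a b (some s') ≤ (1 + 1 / (H : ℝ)) * P' h (some s) a b (some s'))
    (μ : ℕ → Option S → A → ℝ) (ν : ℕ → Option S → B → ℝ)
    (hμ : IsPolicy H μ) (hν : IsPolicy H ν)
    (s₁ : S) (h : ℕ) (hh : h ∈ Finset.Icc 1 H) (s : S) (a : A) (b : B) :
    (1 / 4) * val H P' (ind h (some s) a b) μ ν (some s₁)
        ≤ val H P'' (ind h (some s) a b) μ ν (some s₁) ∧
      val H P'' (ind h (some s) a b) μ ν (some s₁)
        ≤ 3 * val H P' (ind h (some s) a b) μ ν (some s₁) := by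
  obtain ⟨hh1, hh2⟩ := Finset.mem_Icc.mp hh
  have hHpos : (0:ℝ) < H := by exact_mod_cast hH
  have h1H : (0:ℝ) ≤ 1/(H:ℝ) := by positivity
  have h1H' : 1/(H:ℝ) ≤ 1 := by
    rw [div_le_one hHpos]; exact_mod_cast hH
  have hVnn : 0 ≤ val H P' (ind h (some s) a b) μ ν (some s₁) :=
    vfuel_nonneg P' hP' μ ν hμ hν _ (ind_nonneg h (some s) a b) H 1 (some s₁)
      le_rfl (by omega)
  have hup := vfuel_le_aux P' P'' hP' hP'' habs' habs'' μ ν hμ hν h s a b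
    (1 + 1/(H:ℝ)) (by linarith)
    (fun h' hm t a' b' t' => (hacc h' hm t a' b' t').2) H 1 (some s₁) le_rfl (by omega)
  have hlo := vfuel_ge_aux P' P'' hP' hP'' habs' habs'' μ ν hμ hν h s a b
    (1 - 1/(H:ℝ)) (by linarith)
    (fun h' hm t a' b' t' => (hacc h' hm t a' b' t').1) H 1 (some s₁) le_rfl (by omega)
  have hc3 := upper_const H (h-1) hH (by omega)
  have hc4 := lower_const H (h-1) hH (by omega)
  constructor
  · calc (1/4) * val H P' (ind h (some s) a b) μ ν (some s₁)
        ≤ (1 - 1/(H:ℝ)) ^ (h - 1) * val H P' (ind h (some s) a b) μ ν (some s₁) :=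
          mul_le_mul_of_nonneg_right hc4 hVnn
      _ ≤ val H P'' (ind h (some s) a b) μ ν (some s₁) := hlo
  · calc val H P'' (ind h (some s) a b) μ ν (some s₁)
        ≤ (1 + 1/(H:ℝ)) ^ (h - 1) * val H P' (ind h (some s) a b) μ ν (some s₁) := hup
      _ ≤ 3 * val H P' (ind h (some s) a b) μ ν (some s₁) :=
          mul_le_mul_of_nonneg_right hc3 hVnn
end

section
/- Let P be the transition kernel of a finite two-player zero-sum Markov game, let ℱ ⊆ [H] × 𝒮 × 𝒜 × ℬ × 𝒮 be any set of tuples, and let P̃ be the absorbing kernel obtained from P and ℱ. Then for every Markov policy pair (μ,ν) and every (h,s,a,b) ∈ [H] × 𝒮 × 𝒜 × ℬ, V^{μ,ν}(1_{h,s,a,b}, P) ≥ V^{μ,ν}(1_{h,s,a,b}, P̃). -/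
/-- The absorbing kernel `P̃` over the extended state space `Option S` (with `none` the
absorbing state `s†`) obtained from the kernel `P` and a set `ℱ` of infrequent tuples:
`P̃_h(s'|s,a,b) = P_h(s'|s,a,b)` for `(h,s,a,b,s') ∉ ℱ`, `P̃_h(s'|s,a,b) = 0` for
`(h,s,a,b,s') ∈ ℱ`, `P̃_h(s†|s†,a,b) = 1`, and
`P̃_h(s†|s,a,b) = 1 − ∑_{s' : (h,s,a,b,s') ∉ ℱ} P_h(s'|s,a,b)`. -/
noncomputable def absorb {S A B : Type*} [Fintype S]
    [DecidableEq S] [DecidableEq A] [DecidableEq B]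
    (P : ℕ → S → A → B → S → ℝ) (F : Finset (ℕ × S × A × B × S)) :
    ℕ → Option S → A → B → Option S → ℝ :=
  fun h x a b y =>
    match x, y with
    | some s, some s' => if (h, s, a, b, s') ∈ F then 0 else P h s a b s'
    | some s, none => 1 - ∑ s' : S, if (h, s, a, b, s') ∈ F then 0 else P h s a b s'
    | none, none => 1
    | none, some _ => 0

/-- For any set `ℱ` of tuples, the visitation probability of any
`(h,s,a,b)` (with `h ∈ [H]`, `s ∈ 𝒮`) under the original kernel `P` is at least its
visitation probability under the absorbing kernel `P̃` obtained from `P` and `ℱ`,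
for every Markov policy pair (given on the extended state space and restricted to `𝒮`
for the original game). -/
lemma Vfuel_abs_none {S A B : Type*} [Fintype S] [Fintype A] [Fintype B]
    [DecidableEq S] [DecidableEq A] [DecidableEq B]
    (P : ℕ → S → A → B → S → ℝ) (F : Finset (ℕ × S × A × B × S))
    (μ : ℕ → Option S → A → ℝ) (ν : ℕ → Option S → B → ℝ)
    (h : ℕ) (s : S) (a : A) (b : B) :
    ∀ n h', Vfuel (absorb P F) (ind h (some s) a b) μ ν n h' none = 0 := by
  intro n
  induction n with
  | zero => intro h'; simp [Vfuel]
  | succ n ih =>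
    intro h'
    simp [Vfuel, ind, absorb, Fintype.sum_option, ih]

lemma Vfuel_nonneg {S A B : Type*} [Fintype S] [Fintype A] [Fintype B]
    (H : ℕ) (P : ℕ → S → A → B → S → ℝ) (r : ℕ → S → A → B → ℝ)
    (μ : ℕ → S → A → ℝ) (ν : ℕ → S → B → ℝ)
    (hP : ∀ h ∈ Finset.Icc 1 H, ∀ s a b s', 0 ≤ P h s a b s')
    (hμ : ∀ h ∈ Finset.Icc 1 H, ∀ s a, 0 ≤ μ h s a)
    (hν : ∀ h ∈ Finset.Icc 1 H, ∀ s b, 0 ≤ ν h s b)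
    (hr : ∀ h s a b, 0 ≤ r h s a b) :
    ∀ n h', 1 ≤ h' → h' + n ≤ H + 1 → ∀ t, 0 ≤ Vfuel P r μ ν n h' t := by
  intro n
  induction n with
  | zero => intro h' _ _ t; simp [Vfuel]
  | succ n ih =>
    intro h' h1 h2 t
    have hmem : h' ∈ Finset.Icc 1 H := by
      simp only [Finset.mem_Icc]; omega
    simp only [Vfuel]
    apply Finset.sum_nonneg; intro a' _
    apply Finset.sum_nonneg; intro b' _
    apply mul_nonneg (mul_nonneg (hμ h' hmem t a') (hν h' hmem t b'))
    apply add_nonneg (hr _ _ _ _)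
    apply Finset.sum_nonneg; intro s' _
    exact mul_nonneg (hP h' hmem t a' b' s') (ih (h' + 1) (by omega) (by omega) s')

lemma Vfuel_abs_le {S A B : Type*} [Fintype S] [Fintype A] [Fintype B]
    [DecidableEq S] [DecidableEq A] [DecidableEq B]
    (H : ℕ) (P : ℕ → S → A → B → S → ℝ) (hP : IsKernel H P)
    (F : Finset (ℕ × S × A × B × S))
    (μ : ℕ → Option S → A → ℝ) (ν : ℕ → Option S → B → ℝ)
    (hμ : IsPolicy H μ) (hν : IsPolicy H ν)
    (h : ℕ) (s : S) (a : A) (b : B) :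
    ∀ n h', 1 ≤ h' → h' + n ≤ H + 1 → ∀ t : S,
      Vfuel (absorb P F) (ind h (some s) a b) μ ν n h' (some t)
        ≤ Vfuel P (ind h s a b)
            (fun h' s' => μ h' (some s')) (fun h' s' => ν h' (some s')) n h' t := by
  have hVP : ∀ n h', 1 ≤ h' → h' + n ≤ H + 1 → ∀ t : S,
      0 ≤ Vfuel P (ind h s a b)
            (fun h' s' => μ h' (some s')) (fun h' s' => ν h' (some s')) n h' t := by
    apply Vfuel_nonneg
    · intro h' hm s' a' b' s''; exact (hP h' hm s' a' b').1 s''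
    · intro h' hm s' a'; exact (hμ h' hm (some s')).1 a'
    · intro h' hm s' b'; exact (hν h' hm (some s')).1 b'
    · intro h' s' a' b'; unfold ind; positivity
  intro n
  induction n with
  | zero => intro h' _ _ t; simp [Vfuel]
  | succ n ih =>
    intro h' h1 h2 t
    have hmem : h' ∈ Finset.Icc 1 H := by
      simp only [Finset.mem_Icc]; omega
    simp only [Vfuel]
    apply Finset.sum_le_sum; intro a' _
    apply Finset.sum_le_sum; intro b' _
    apply mul_le_mul_of_nonneg_left _
      (mul_nonneg ((hμ h' hmem (some t)).1 a') ((hν h' hmem (some t)).1 b'))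
    have hind : ind h (some s) a b h' (some t) a' b' = ind h s a b h' t a' b' := by
      simp [ind]
    rw [hind]
    apply add_le_add le_rfl
    rw [Fintype.sum_option, Vfuel_abs_none, mul_zero, zero_add]
    apply Finset.sum_le_sum; intro s' _
    by_cases hmemF : (h', t, a', b', s') ∈ F
    · simp only [absorb, hmemF, if_true, zero_mul]
      exact mul_nonneg ((hP h' hmem t a' b').1 s') (hVP n (h' + 1) (by omega) (by omega) s')
    · simp only [absorb, hmemF, if_false]
      exact mul_le_mul_of_nonneg_left (ih (h' + 1) (by omega) (by omega) s')
        ((hP h' hmem t a' b').1 s')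

/-- (see above) -/
theorem stmt3 {S A B : Type*} [Fintype S] [Fintype A] [Fintype B]
    [DecidableEq S] [DecidableEq A] [DecidableEq B]
    (H : ℕ) (hH : 1 ≤ H)
    (P : ℕ → S → A → B → S → ℝ) (hP : IsKernel H P)
    (F : Finset (ℕ × S × A × B × S))
    (μ : ℕ → Option S → A → ℝ) (ν : ℕ → Option S → B → ℝ)
    (hμ : IsPolicy H μ) (hν : IsPolicy H ν)
    (s₁ : S) (h : ℕ) (hh : h ∈ Finset.Icc 1 H) (s : S) (a : A) (b : B) :
    val H (absorb P F) (ind h (some s) a b) μ ν (some s₁)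
      ≤ val H P (ind h s a b)
          (fun h' s' => μ h' (some s')) (fun h' s' => ν h' (some s')) s₁ := by
  exact Vfuel_abs_le H P hP F μ ν hμ hν h s a b H 1 le_rfl (by omega) s₁
end

section
/- (Law-of-total-variance bound) Consider a finite two-player zero-sum Markov game with horizon H, transition kernel P, rewards r_h(s,a,b) ∈ [0,1], and a Markov policy pair (μ,ν). Let f_{H+1} ≡ 0 and let f_h = V_h^{μ,ν} be the reward-to-go value functions of (μ,ν) under (r,P), and let d_h(s,a,b) = V^{μ,ν}(1_{h,s,a,b},P) be the occupancy probabilities. Then ∑_{h=1}^H ∑_{s,a,b} d_h(s,a,b) · Var_{s' ∼ P_h(·|s,a,b)}( f_{h+1}(s') ) ≤ H². -/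
/-- The variance `Var_{s' ∼ p}(f)` of `f(s')` when `s'` is drawn from the (finitely
supported) distribution `p`. -/
noncomputable def varDist {S : Type*} [Fintype S] (p : S → ℝ) (f : S → ℝ) : ℝ :=
  ∑ s', p s' * f s' ^ 2 - (∑ s', p s' * f s') ^ 2

lemma sum_swap6 {A B S T A' B' : Type*} [Fintype A] [Fintype B] [Fintype S] [Fintype T]
    [Fintype A'] [Fintype B'] (F : A → B → S → T → A' → B' → ℝ) :
    ∑ a, ∑ b, ∑ s', ∑ s, ∑ a', ∑ b', F a b s' s a' b'
      = ∑ s, ∑ a', ∑ b', ∑ a, ∑ b, ∑ s', F a b s' s a' b' := by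
  have := Finset.sum_comm (s := (Finset.univ : Finset (A×B×S)))
    (t := (Finset.univ : Finset (T×A'×B')))
    (f := fun x y => F x.1 x.2.1 x.2.2 y.1 y.2.1 y.2.2)
  simpa [Fintype.sum_prod_type] using this

lemma sum_swap31 {S A B T : Type*} [Fintype S] [Fintype A] [Fintype B] [Fintype T]
    (F : S → A → B → T → ℝ) :
    ∑ s, ∑ a, ∑ b, ∑ t, F s a b t = ∑ t, ∑ s, ∑ a, ∑ b, F s a b t := by
  have := Finset.sum_comm (s := (Finset.univ : Finset (S×A×B)))
    (t := (Finset.univ : Finset T))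
    (f := fun x y => F x.1 x.2.1 x.2.2 y)
  simpa [Fintype.sum_prod_type] using this

lemma wsum_bounds {ι : Type*} [Fintype ι] {w x : ι → ℝ} {C : ℝ} (hw : ∀ i, 0 ≤ w i)
    (hmass : ∑ i, w i = 1) (hx : ∀ i, 0 ≤ x i ∧ x i ≤ C) :
    0 ≤ ∑ i, w i * x i ∧ ∑ i, w i * x i ≤ C := by
  constructor
  · exact Finset.sum_nonneg fun i _ => mul_nonneg (hw i) (hx i).1
  · calc ∑ i, w i * x i ≤ ∑ i, w i * C :=
        Finset.sum_le_sum fun i _ => mul_le_mul_of_nonneg_left (hx i).2 (hw i)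
    _ = C := by rw [← Finset.sum_mul, hmass, one_mul]

lemma jensen_sq {ι : Type*} [Fintype ι] (w x : ι → ℝ) (hw : ∀ i, 0 ≤ w i)
    (hmass : ∑ i, w i = 1) : (∑ i, w i * x i) ^ 2 ≤ ∑ i, w i * x i ^ 2 := by
  have h := Finset.sum_mul_sq_le_sq_mul_sq Finset.univ (fun i => Real.sqrt (w i))
    (fun i => Real.sqrt (w i) * x i)
  have e1 : ∀ i : ι, Real.sqrt (w i) * (Real.sqrt (w i) * x i) = w i * x i := fun i => by
    rw [← mul_assoc, Real.mul_self_sqrt (hw i)]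
  have e2 : ∀ i : ι, Real.sqrt (w i) ^ 2 = w i := fun i => Real.sq_sqrt (hw i)
  have e3 : ∀ i : ι, (Real.sqrt (w i) * x i) ^ 2 = w i * x i ^ 2 := fun i => by
    rw [mul_pow, e2]
  simp only [e1, e2, e3, hmass, one_mul] at h
  exact h

noncomputable def occ {S A B : Type*} [Fintype S] [Fintype A] [Fintype B] [DecidableEq S]
    (P : ℕ → S → A → B → S → ℝ) (μ : ℕ → S → A → ℝ) (ν : ℕ → S → B → ℝ) :
    ℕ → ℕ → S → S → ℝ
  | 0, _, s₀, t => if t = s₀ then 1 else 0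
  | m + 1, g, s₀, t =>
      ∑ a, ∑ b, ∑ s', μ g s₀ a * ν g s₀ b * P g s₀ a b s' * occ P μ ν m (g + 1) s' t

section lemmas
variable {S A B : Type*} [Fintype S] [Fintype A] [Fintype B] [DecidableEq S]
  {H : ℕ} {P : ℕ → S → A → B → S → ℝ} {μ : ℕ → S → A → ℝ} {ν : ℕ → S → B → ℝ}

lemma occ_nonneg (hP : IsKernel H P) (hμ : IsPolicy H μ) (hν : IsPolicy H ν) :
    ∀ m g s₀ t, 1 ≤ g → g + m ≤ H + 1 → 0 ≤ occ P μ ν m g s₀ t := by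
  intro m
  induction m with
  | zero => intro g s₀ t _ _; simp only [occ]; positivity
  | succ m ih =>
    intro g s₀ t hg hgm
    have hgH : g ∈ Finset.Icc 1 H := by simp only [Finset.mem_Icc]; omega
    apply Finset.sum_nonneg; intro a _
    apply Finset.sum_nonneg; intro b _
    apply Finset.sum_nonneg; intro s' _
    have h1 := (hP g hgH s₀ a b).1 s'
    have h2 := (hμ g hgH s₀).1 a
    have h3 := (hν g hgH s₀).1 b
    have h4 := ih (g+1) s' t (by omega) (by omega)
    positivity

lemma occ_mass (hP : IsKernel H P) (hμ : IsPolicy H μ) (hν : IsPolicy H ν) :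
    ∀ m g s₀, 1 ≤ g → g + m ≤ H + 1 → ∑ t, occ P μ ν m g s₀ t = 1 := by
  intro m
  induction m with
  | zero => intro g s₀ _ _; simp [occ]
  | succ m ih =>
    intro g s₀ hg hgm
    have hgH : g ∈ Finset.Icc 1 H := by simp only [Finset.mem_Icc]; omega
    show (∑ t, ∑ a, ∑ b, ∑ s',
        μ g s₀ a * ν g s₀ b * P g s₀ a b s' * occ P μ ν m (g + 1) s' t) = 1
    rw [Finset.sum_comm]
    have e1 : ∀ a ∈ Finset.univ (α := A),
        (∑ t : S, ∑ b, ∑ s', μ g s₀ a * ν g s₀ b * P g s₀ a b s' * occ P μ ν m (g+1) s' t)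
        = μ g s₀ a := by
      intro a _
      rw [Finset.sum_comm]
      have e2 : ∀ b ∈ Finset.univ (α := B),
          (∑ t : S, ∑ s', μ g s₀ a * ν g s₀ b * P g s₀ a b s' * occ P μ ν m (g+1) s' t)
          = μ g s₀ a * ν g s₀ b := by
        intro b _
        rw [Finset.sum_comm]
        have e3 : ∀ s' ∈ Finset.univ (α := S),
            (∑ t : S, μ g s₀ a * ν g s₀ b * P g s₀ a b s' * occ P μ ν m (g+1) s' t)
            = μ g s₀ a * ν g s₀ b * P g s₀ a b s' := by
          intro s' _
          rw [← Finset.mul_sum, ih (g+1) s' (by omega) (by omega), mul_one]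
        rw [Finset.sum_congr rfl e3, ← Finset.mul_sum, (hP g hgH s₀ a b).2, mul_one]
      rw [Finset.sum_congr rfl e2, ← Finset.mul_sum, (hν g hgH s₀).2, mul_one]
    rw [Finset.sum_congr rfl e1, (hμ g hgH s₀).2]

lemma occ_succ_last (m : ℕ) : ∀ g s₀ t, occ P μ ν (m+1) g s₀ t =
    ∑ s, ∑ a, ∑ b, occ P μ ν m g s₀ s * μ (g+m) s a * ν (g+m) s b * P (g+m) s a b t := by
  induction m with
  | zero =>
    intro g s₀ t
    show (∑ a, ∑ b, ∑ s', μ g s₀ a * ν g s₀ b * P g s₀ a b s' *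
        (if t = s' then (1:ℝ) else 0)) = ∑ s, ∑ a, ∑ b,
        (if s = s₀ then (1:ℝ) else 0) * μ (g+0) s a * ν (g+0) s b * P (g+0) s a b t
    simp [mul_ite, ite_mul, Finset.sum_ite_eq, Finset.sum_ite_eq']
  | succ m ih =>
    intro g s₀ t
    have e1 : occ P μ ν (m+1+1) g s₀ t = ∑ a, ∑ b, ∑ s',
        μ g s₀ a * ν g s₀ b * P g s₀ a b s' * occ P μ ν (m+1) (g+1) s' t := rfl
    rw [e1]
    have e2 : ∀ (a : A) (b : B) (s' : S),
        μ g s₀ a * ν g s₀ b * P g s₀ a b s' * occ P μ ν (m+1) (g+1) s' t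
        = ∑ s, ∑ a', ∑ b', μ g s₀ a * ν g s₀ b * P g s₀ a b s' * occ P μ ν m (g+1) s' s *
            μ (g+1+m) s a' * ν (g+1+m) s b' * P (g+1+m) s a' b' t := by
      intro a b s'
      rw [ih]
      simp only [Finset.mul_sum]
      exact Finset.sum_congr rfl fun s _ => Finset.sum_congr rfl fun a' _ =>
        Finset.sum_congr rfl fun b' _ => by ring
    simp only [e2]
    rw [sum_swap6]
    have hgm : g + (m+1) = g + 1 + m := by omega
    rw [hgm]
    refine Finset.sum_congr rfl fun s _ => Finset.sum_congr rfl fun a' _ =>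
      Finset.sum_congr rfl fun b' _ => ?_
    have e3 : occ P μ ν (m+1) g s₀ s = ∑ a, ∑ b, ∑ s',
        μ g s₀ a * ν g s₀ b * P g s₀ a b s' * occ P μ ν m (g+1) s' s := rfl
    rw [e3]
    simp only [Finset.sum_mul]

end lemmas

section vf
variable {S A B : Type*} [Fintype S] [Fintype A] [Fintype B] [DecidableEq S]
  [DecidableEq A] [DecidableEq B]
  {H : ℕ} {P : ℕ → S → A → B → S → ℝ} {r : ℕ → S → A → B → ℝ}
  {μ : ℕ → S → A → ℝ} {ν : ℕ → S → B → ℝ}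

lemma Vfuel_bounds (hP : IsKernel H P) (hμ : IsPolicy H μ) (hν : IsPolicy H ν)
    (hr : ∀ h ∈ Finset.Icc 1 H, ∀ s a b, 0 ≤ r h s a b ∧ r h s a b ≤ 1) :
    ∀ n g s, 1 ≤ g → g + n ≤ H + 1 →
      0 ≤ Vfuel P r μ ν n g s ∧ Vfuel P r μ ν n g s ≤ n := by
  intro n
  induction n with
  | zero => intro g s _ _; show (0:ℝ) ≤ 0 ∧ (0:ℝ) ≤ ((0:ℕ):ℝ); simp
  | succ n ihn =>
    intro g s hg hgn
    have hgH : g ∈ Finset.Icc 1 H := by simp only [Finset.mem_Icc]; omega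
    show 0 ≤ (∑ a, ∑ b, μ g s a * ν g s b *
        (r g s a b + ∑ s', P g s a b s' * Vfuel P r μ ν n (g+1) s')) ∧
      (∑ a, ∑ b, μ g s a * ν g s b *
        (r g s a b + ∑ s', P g s a b s' * Vfuel P r μ ν n (g+1) s')) ≤ (n+1 : ℕ)
    have key : ∀ (a : A) (b : B), 0 ≤ r g s a b + ∑ s', P g s a b s' * Vfuel P r μ ν n (g+1) s'
        ∧ r g s a b + ∑ s', P g s a b s' * Vfuel P r μ ν n (g+1) s' ≤ (n+1 : ℕ) := by
      intro a b
      have hq := wsum_bounds (w := fun s' => P g s a b s')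
        (x := fun s' => Vfuel P r μ ν n (g+1) s') (C := (n:ℝ))
        ((hP g hgH s a b).1) ((hP g hgH s a b).2)
        (fun s' => ihn (g+1) s' (by omega) (by omega))
      have hrb := hr g hgH s a b
      constructor
      · linarith [hq.1, hrb.1]
      · push_cast; linarith [hq.2, hrb.2]
    have hw : ∀ p : A × B, 0 ≤ μ g s p.1 * ν g s p.2 :=
      fun p => mul_nonneg ((hμ g hgH s).1 p.1) ((hν g hgH s).1 p.2)
    have hwm : ∑ p : A × B, μ g s p.1 * ν g s p.2 = 1 := by
      rw [Fintype.sum_prod_type]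
      simp only [← Finset.mul_sum, (hν g hgH s).2, mul_one, (hμ g hgH s).2]
    have := wsum_bounds (w := fun p : A × B => μ g s p.1 * ν g s p.2)
      (x := fun p : A × B => r g s p.1 p.2 +
        ∑ s', P g s p.1 p.2 s' * Vfuel P r μ ν n (g+1) s') (C := ((n+1 : ℕ) : ℝ))
      hw hwm (fun p => key p.1 p.2)
    rw [Fintype.sum_prod_type] at this
    exact this

lemma vfuel_ind_dead (h : ℕ) (s : S) (a : A) (b : B) :
    ∀ n g s₀, h < g → Vfuel P (ind h s a b) μ ν n g s₀ = 0 := by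
  intro n
  induction n with
  | zero => intro g s₀ _; rfl
  | succ n ihn =>
    intro g s₀ hg
    show (∑ a', ∑ b', μ g s₀ a' * ν g s₀ b' * (ind h s a b g s₀ a' b' +
        ∑ s', P g s₀ a' b' s' * Vfuel P (ind h s a b) μ ν n (g+1) s')) = 0
    have h2 : ∀ s' : S, Vfuel P (ind h s a b) μ ν n (g+1) s' = 0 :=
      fun s' => ihn (g+1) s' (by omega)
    simp [ind, show ¬ g = h by omega, h2]

lemma vfuel_ind_eq (s : S) (a : A) (b : B) :
    ∀ m g n s₀, m < n → Vfuel P (ind (g+m) s a b) μ ν n g s₀ =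
      occ P μ ν m g s₀ s * μ (g+m) s a * ν (g+m) s b := by
  intro m
  induction m with
  | zero =>
    intro g n s₀ hn
    obtain ⟨k, rfl⟩ : ∃ k, n = k + 1 := ⟨n - 1, by omega⟩
    simp only [Nat.add_zero]
    show (∑ a', ∑ b', μ g s₀ a' * ν g s₀ b' * (ind g s a b g s₀ a' b' +
        ∑ s', P g s₀ a' b' s' * Vfuel P (ind g s a b) μ ν k (g+1) s'))
        = occ P μ ν 0 g s₀ s * μ g s a * ν g s b
    have hdead : ∀ s' : S, Vfuel P (ind g s a b) μ ν k (g+1) s' = 0 :=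
      fun s' => vfuel_ind_dead g s a b k (g+1) s' (by omega)
    simp only [hdead, mul_zero, Finset.sum_const_zero, add_zero]
    show (∑ a', ∑ b', μ g s₀ a' * ν g s₀ b' *
        (if g = g ∧ s₀ = s ∧ a' = a ∧ b' = b then (1:ℝ) else 0))
        = (if s = s₀ then (1:ℝ) else 0) * μ g s a * ν g s b
    by_cases hs : s₀ = s
    · subst hs
      simp [mul_ite, ite_and, Finset.sum_ite_eq', Finset.sum_ite_eq]
    · have hs' : ¬ s = s₀ := fun h => hs h.symm
      simp [hs, hs']
  | succ m ihm =>
    intro g n s₀ hn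
    obtain ⟨k, rfl⟩ : ∃ k, n = k + 1 := ⟨n - 1, by omega⟩
    have hmk : m < k := by omega
    show (∑ a', ∑ b', μ g s₀ a' * ν g s₀ b' * (ind (g+(m+1)) s a b g s₀ a' b' +
        ∑ s', P g s₀ a' b' s' * Vfuel P (ind (g+(m+1)) s a b) μ ν k (g+1) s'))
        = occ P μ ν (m+1) g s₀ s * μ (g+(m+1)) s a * ν (g+(m+1)) s b
    have hgm : g + (m+1) = (g+1) + m := by omega
    have hrec : ∀ s' : S, Vfuel P (ind (g+(m+1)) s a b) μ ν k (g+1) s'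
        = occ P μ ν m (g+1) s' s * μ (g+(m+1)) s a * ν (g+(m+1)) s b := by
      intro s'
      rw [hgm]
      exact ihm (g+1) k s' hmk
    have hind : ∀ (a' : A) (b' : B), ind (g+(m+1)) s a b g s₀ a' b' = 0 := by
      intro a' b'
      simp [ind, show ¬ g = g + (m+1) by omega]
    simp only [hrec, hind, zero_add]
    have e3 : occ P μ ν (m+1) g s₀ s = ∑ a', ∑ b', ∑ s',
        μ g s₀ a' * ν g s₀ b' * P g s₀ a' b' s' * occ P μ ν m (g+1) s' s := rfl
    rw [e3]
    simp only [Finset.sum_mul, Finset.mul_sum]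
    exact Finset.sum_congr rfl fun a' _ => Finset.sum_congr rfl fun b' _ =>
      Finset.sum_congr rfl fun s' _ => by ring

end vf

section step
variable {S A B : Type*} [Fintype S] [Fintype A] [Fintype B] [DecidableEq S]
  [DecidableEq A] [DecidableEq B]
  {H : ℕ} {P : ℕ → S → A → B → S → ℝ} {r : ℕ → S → A → B → ℝ}
  {μ : ℕ → S → A → ℝ} {ν : ℕ → S → B → ℝ}

lemma step_bound (hP : IsKernel H P) (hμ : IsPolicy H μ) (hν : IsPolicy H ν)
    (hr : ∀ h ∈ Finset.Icc 1 H, ∀ s a b, 0 ≤ r h s a b ∧ r h s a b ≤ 1)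
    (s₁ : S) (i : ℕ) (hi : i < H) :
    ∑ s, ∑ a, ∑ b, occ P μ ν i 1 s₁ s * μ (i+1) s a * ν (i+1) s b *
      varDist (P (i+1) s a b) (fun s' => Vfuel P r μ ν (H - (i+1)) (i+2) s')
    ≤ (∑ t, occ P μ ν (i+1) 1 s₁ t * (Vfuel P r μ ν (H - (i+1)) (i+2) t)^2)
      - (∑ t, occ P μ ν i 1 s₁ t * (Vfuel P r μ ν (H - i) (i+1) t)^2)
      + (2*((H:ℝ) - i) - 1) := by
  have hstep : (i+1) ∈ Finset.Icc 1 H := by simp only [Finset.mem_Icc]; omega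
  set f : S → ℝ := fun s' => Vfuel P r μ ν (H - (i+1)) (i+2) s' with hfdef
  set d : S → ℝ := occ P μ ν i 1 s₁ with hddef
  set q : S → A → B → ℝ := fun s a b => ∑ t, P (i+1) s a b t * f t with hqdef
  have split : ∀ (s : S) (a : A) (b : B),
      d s * μ (i+1) s a * ν (i+1) s b * varDist (P (i+1) s a b) f
      = d s * μ (i+1) s a * ν (i+1) s b * (∑ t, P (i+1) s a b t * f t ^ 2)
        - d s * μ (i+1) s a * ν (i+1) s b * (q s a b) ^ 2 := by
    intro s a b
    rw [varDist, hqdef]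
    ring
  rw [show (∑ s, ∑ a, ∑ b, d s * μ (i+1) s a * ν (i+1) s b *
      varDist (P (i+1) s a b) fun s' => Vfuel P r μ ν (H - (i+1)) (i+2) s')
      = ∑ s, ∑ a, ∑ b, (d s * μ (i+1) s a * ν (i+1) s b * (∑ t, P (i+1) s a b t * f t ^ 2)
        - d s * μ (i+1) s a * ν (i+1) s b * (q s a b) ^ 2) from
    Finset.sum_congr rfl fun s _ => Finset.sum_congr rfl fun a _ =>
      Finset.sum_congr rfl fun b _ => split s a b]
  simp only [Finset.sum_sub_distrib]
  -- Part 1 : equals next-step occupancy second moment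
  have hA : (∑ s, ∑ a, ∑ b, d s * μ (i+1) s a * ν (i+1) s b * (∑ t, P (i+1) s a b t * f t ^ 2))
      = ∑ t, occ P μ ν (i+1) 1 s₁ t * f t ^ 2 := by
    have h1i : 1 + i = i + 1 := by omega
    have e : ∀ t, occ P μ ν (i+1) 1 s₁ t
        = ∑ s, ∑ a, ∑ b, d s * μ (i+1) s a * ν (i+1) s b * P (i+1) s a b t := by
      intro t
      rw [occ_succ_last i 1 s₁ t, h1i]
    simp only [e, Finset.sum_mul, Finset.mul_sum]
    rw [sum_swap31 (fun s a b t => d s * μ (i+1) s a * ν (i+1) s b * (P (i+1) s a b t * f t ^ 2))]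
    exact Finset.sum_congr rfl fun t _ => Finset.sum_congr rfl fun s _ =>
      Finset.sum_congr rfl fun a _ => Finset.sum_congr rfl fun b _ => by ring
  rw [hA]
  -- Part 2 : lower bound via Jensen
  have hfb : ∀ t, 0 ≤ f t ∧ f t ≤ ((H - (i+1) : ℕ) : ℝ) := by
    intro t
    exact Vfuel_bounds hP hμ hν hr (H - (i+1)) (i+2) t (by omega) (by omega)
  have hKr : ((H:ℝ) - i) ≥ 1 := by
    have : (i:ℝ) + 1 ≤ (H:ℝ) := by exact_mod_cast hi
    linarith
  have hB : ∀ s : S, d s * ((Vfuel P r μ ν (H - i) (i+1) s)^2 - (2*((H:ℝ) - i) - 1))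
      ≤ ∑ a, ∑ b, d s * μ (i+1) s a * ν (i+1) s b * (q s a b) ^ 2 := by
    intro s
    have hds : 0 ≤ d s := occ_nonneg hP hμ hν i 1 s₁ s (by omega) (by omega)
    have hw : ∀ p : A × B, 0 ≤ μ (i+1) s p.1 * ν (i+1) s p.2 :=
      fun p => mul_nonneg ((hμ (i+1) hstep s).1 p.1) ((hν (i+1) hstep s).1 p.2)
    have hwm : ∑ p : A × B, μ (i+1) s p.1 * ν (i+1) s p.2 = 1 := by
      rw [Fintype.sum_prod_type]
      simp only [← Finset.mul_sum, (hν (i+1) hstep s).2, mul_one, (hμ (i+1) hstep s).2]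
    have hq0 : ∀ (a : A) (b : B), 0 ≤ q s a b := by
      intro a b
      exact Finset.sum_nonneg fun t _ =>
        mul_nonneg ((hP (i+1) hstep s a b).1 t) (hfb t).1
    -- F = R + G
    have hFunfold : Vfuel P r μ ν (H - i) (i+1) s
        = ∑ a, ∑ b, μ (i+1) s a * ν (i+1) s b * (r (i+1) s a b + q s a b) := by
      have hHi : H - i = (H - (i+1)) + 1 := by omega
      rw [hHi]
      rfl
    set R : ℝ := ∑ a, ∑ b, μ (i+1) s a * ν (i+1) s b * r (i+1) s a b with hRdef
    set G : ℝ := ∑ a, ∑ b, μ (i+1) s a * ν (i+1) s b * q s a b with hGdef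
    have hF : Vfuel P r μ ν (H - i) (i+1) s = R + G := by
      rw [hFunfold, hRdef, hGdef, ← Finset.sum_add_distrib]
      refine Finset.sum_congr rfl fun a _ => ?_
      rw [← Finset.sum_add_distrib]
      exact Finset.sum_congr rfl fun b _ => by ring
    have hRb : 0 ≤ R ∧ R ≤ 1 := by
      have := wsum_bounds (w := fun p : A × B => μ (i+1) s p.1 * ν (i+1) s p.2)
        (x := fun p : A × B => r (i+1) s p.1 p.2) (C := (1:ℝ)) hw hwm
        (fun p => hr (i+1) hstep s p.1 p.2)
      rwa [Fintype.sum_prod_type] at this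
    have hG0 : 0 ≤ G :=
      Finset.sum_nonneg fun a _ => Finset.sum_nonneg fun b _ =>
        mul_nonneg (mul_nonneg ((hμ (i+1) hstep s).1 a) ((hν (i+1) hstep s).1 b)) (hq0 a b)
    have hFK : Vfuel P r μ ν (H - i) (i+1) s ≤ ((H:ℝ) - i) := by
      have h := (Vfuel_bounds hP hμ hν hr (H - i) (i+1) s (by omega) (by omega)).2
      have : ((H - i : ℕ) : ℝ) = (H:ℝ) - i := by
        rw [Nat.cast_sub (le_of_lt hi)]
      linarith
    -- Jensen
    have hJ : G ^ 2 ≤ ∑ a, ∑ b, μ (i+1) s a * ν (i+1) s b * (q s a b) ^ 2 := by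
      have := jensen_sq (fun p : A × B => μ (i+1) s p.1 * ν (i+1) s p.2)
        (fun p : A × B => q s p.1 p.2) hw hwm
      rw [Fintype.sum_prod_type, Fintype.sum_prod_type] at this
      rw [hGdef]
      exact this
    -- scalar inequality
    have hscalar : (Vfuel P r μ ν (H - i) (i+1) s)^2 - (2*((H:ℝ) - i) - 1) ≤ G ^ 2 := by
      set F := Vfuel P r μ ν (H - i) (i+1) s
      set Kr := (H:ℝ) - i
      have hGF : G = F - R := by rw [hF]; ring
      rw [hGF]
      have h1 : 0 ≤ 1 - R := by linarith [hRb.2]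
      have h2 : 0 ≤ 2*Kr - 1 - R := by linarith [hRb.2, hKr]
      have h3 : 0 ≤ Kr - F := by linarith [hFK]
      nlinarith [mul_nonneg h1 h2, mul_nonneg hRb.1 h3]
    calc d s * ((Vfuel P r μ ν (H - i) (i+1) s)^2 - (2*((H:ℝ) - i) - 1))
        ≤ d s * G ^ 2 := mul_le_mul_of_nonneg_left hscalar hds
      _ ≤ d s * (∑ a, ∑ b, μ (i+1) s a * ν (i+1) s b * (q s a b) ^ 2) :=
          mul_le_mul_of_nonneg_left hJ hds
      _ = ∑ a, ∑ b, d s * μ (i+1) s a * ν (i+1) s b * (q s a b) ^ 2 := by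
          simp only [Finset.mul_sum]
          exact Finset.sum_congr rfl fun a _ => Finset.sum_congr rfl fun b _ => by ring
  have hmass : ∑ t, d t = 1 := occ_mass hP hμ hν i 1 s₁ (by omega) (by omega)
  have hBsum : (∑ t, d t * (Vfuel P r μ ν (H - i) (i+1) t)^2) - (2*((H:ℝ) - i) - 1)
      ≤ ∑ s, ∑ a, ∑ b, d s * μ (i+1) s a * ν (i+1) s b * (q s a b) ^ 2 := by
    have e : (∑ t, d t * (Vfuel P r μ ν (H - i) (i+1) t)^2) - (2*((H:ℝ) - i) - 1)
        = ∑ t, d t * ((Vfuel P r μ ν (H - i) (i+1) t)^2 - (2*((H:ℝ) - i) - 1)) := by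
      simp only [mul_sub, Finset.sum_sub_distrib, ← Finset.sum_mul, hmass, one_mul]
    rw [e]
    exact Finset.sum_le_sum fun s _ => hB s
  linarith [hBsum]

end step

lemma arith_sum : ∀ n : ℕ, ∑ i ∈ Finset.range n, (2*((n:ℝ) - i) - 1) = (n:ℝ)^2 := by
  intro n
  induction n with
  | zero => simp
  | succ n ih =>
    rw [Finset.sum_range_succ]
    have e : ∀ i ∈ Finset.range n, (2*(((n+1:ℕ):ℝ) - (i:ℕ)) - 1) = (2*((n:ℝ) - i) - 1) + 2 := by
      intro i _; push_cast; ring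
    rw [Finset.sum_congr rfl e, Finset.sum_add_distrib, ih, Finset.sum_const,
      Finset.card_range]
    push_cast
    ring

/-- (Law-of-total-variance bound.) For a Markov game with horizon `H`,
kernel `P`, rewards in `[0,1]` and a Markov policy pair `(μ,ν)`, with reward-to-go value
functions `f_{h+1} = V^{μ,ν}_{h+1}` (here `Vfuel P r μ ν (H−h) (h+1)`) and occupancy
probabilities `d_h(s,a,b) = V^{μ,ν}(1_{h,s,a,b},P)`:
`∑_{h=1}^H ∑_{s,a,b} d_h(s,a,b) · Var_{s' ∼ P_h(·|s,a,b)}(f_{h+1}(s')) ≤ H²`. -/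
theorem stmt6 {S A B : Type*} [Fintype S] [Fintype A] [Fintype B]
    [DecidableEq S] [DecidableEq A] [DecidableEq B]
    (H : ℕ) (hH : 1 ≤ H)
    (P : ℕ → S → A → B → S → ℝ) (hP : IsKernel H P)
    (r : ℕ → S → A → B → ℝ)
    (hr : ∀ h ∈ Finset.Icc 1 H, ∀ s a b, 0 ≤ r h s a b ∧ r h s a b ≤ 1)
    (μ : ℕ → S → A → ℝ) (ν : ℕ → S → B → ℝ)
    (hμ : IsPolicy H μ) (hν : IsPolicy H ν) (s₁ : S) :
    ∑ h ∈ Finset.Icc 1 H, ∑ s : S, ∑ a : A, ∑ b : B,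
        val H P (ind h s a b) μ ν s₁ *
          varDist (P h s a b) (fun s' => Vfuel P r μ ν (H - h) (h + 1) s')
      ≤ (H : ℝ) ^ 2 := by
  set T : ℕ → ℝ := fun h => ∑ s : S, ∑ a : A, ∑ b : B,
      occ P μ ν (h-1) 1 s₁ s * μ h s a * ν h s b *
        varDist (P h s a b) (fun s' => Vfuel P r μ ν (H - h) (h + 1) s') with hT
  set D : ℕ → ℝ := fun j => ∑ t, occ P μ ν j 1 s₁ t * (Vfuel P r μ ν (H - j) (j+1) t)^2
    with hD
  have hval : ∀ h ∈ Finset.Icc 1 H, (∑ s : S, ∑ a : A, ∑ b : B,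
      val H P (ind h s a b) μ ν s₁ *
        varDist (P h s a b) (fun s' => Vfuel P r μ ν (H - h) (h + 1) s')) = T h := by
    intro h hh
    simp only [Finset.mem_Icc] at hh
    refine Finset.sum_congr rfl fun s _ => Finset.sum_congr rfl fun a _ =>
      Finset.sum_congr rfl fun b _ => ?_
    have h1 : 1 + (h - 1) = h := by omega
    have hv : val H P (ind h s a b) μ ν s₁ = occ P μ ν (h-1) 1 s₁ s * μ h s a * ν h s b := by
      have := vfuel_ind_eq (P := P) (μ := μ) (ν := ν) s a b (h-1) 1 H s₁ (by omega)
      rw [h1] at this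
      exact this
    rw [hv]
  rw [Finset.sum_congr rfl hval]
  have reindex : ∑ h ∈ Finset.Icc 1 H, T h = ∑ i ∈ Finset.range H, T (i+1) := by
    rw [← Finset.Ico_add_one_right_eq_Icc, Finset.sum_Ico_eq_sum_range]
    norm_num
    exact Finset.sum_congr rfl fun i _ => by rw [Nat.add_comm]
  rw [reindex]
  have hstep : ∀ i ∈ Finset.range H, T (i+1) ≤ (D (i+1) - D i) + (2*((H:ℝ) - i) - 1) := by
    intro i hi
    simp only [Finset.mem_range] at hi
    have := step_bound hP hμ hν hr s₁ i hi
    simp only [hT, hD, Nat.add_sub_cancel]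
    convert this using 2 <;> norm_num
  calc ∑ i ∈ Finset.range H, T (i+1)
      ≤ ∑ i ∈ Finset.range H, ((D (i+1) - D i) + (2*((H:ℝ) - i) - 1)) :=
        Finset.sum_le_sum hstep
    _ = (D H - D 0) + ∑ i ∈ Finset.range H, (2*((H:ℝ) - i) - 1) := by
        rw [Finset.sum_add_distrib, Finset.sum_range_sub (f := D)]
    _ ≤ (H:ℝ)^2 := by
        have hDH : D H = 0 := by
          have hz : ∀ t : S, Vfuel P r μ ν (H - H) (H+1) t = 0 := fun t => by
            rw [Nat.sub_self]; rfl
          simp only [hD, hz]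
          simp
        have hD0 : 0 ≤ D 0 := by
          refine Finset.sum_nonneg fun t _ => mul_nonneg ?_ (sq_nonneg _)
          exact occ_nonneg hP hμ hν 0 1 s₁ t (by omega) (by omega)
        rw [hDH, arith_sum H]
        linarith
end

section
/- Let (F_i)_{i≥0} be a filtration and let X_1, X_2, … be a sequence of Bernoulli ({0,1}-valued) random variables with ℙ(X_i = 1 | F_{i−1}) = P_i, where each P_i is F_{i−1}-measurable and each X_i is F_i-measurable. Then for every real W, ℙ[ ∃ n ≥ 1 : ∑_{t=1}^n X_t < (1/2)·∑_{t=1}^n P_t − W ] ≤ e^{−W}. -/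
open MeasureTheory Filter

lemma ville_aux {Ω : Type*} {m0 : MeasurableSpace Ω} {μ : Measure Ω}
    [IsFiniteMeasure μ] {𝒢 : Filtration ℕ m0} {f : ℕ → Ω → ℝ}
    (hf : Supermartingale f 𝒢 μ) (hnonneg : ∀ n ω, 0 ≤ f n ω) {ε : ℝ} (hε : 0 < ε) :
    μ {ω | ∃ n, ε ≤ f n ω} ≤ ENNReal.ofReal ((∫ ω, f 0 ω ∂μ) / ε) := by
  classical
  set A : ℕ → Set Ω := fun n => {ω | ∃ k, k ≤ n ∧ ε ≤ f k ω} with hA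
  have hmeasf : ∀ k, Measurable (f k) := fun k =>
    ((hf.stronglyAdapted k).mono (𝒢.le k)).measurable
  have hAmeas : ∀ n, MeasurableSet (A n) := by
    intro n
    have : A n = ⋃ k, ⋃ _ : k ≤ n, {ω | ε ≤ f k ω} := by
      ext ω; simp [hA]
    rw [this]
    exact MeasurableSet.iUnion fun k => MeasurableSet.iUnion fun _ =>
      measurableSet_le measurable_const (hmeasf k)
  have hkey : ∀ n, μ (A n) ≤ ENNReal.ofReal ((∫ ω, f 0 ω ∂μ) / ε) := by
    intro n
    set τ : Ω → WithTop ℕ := fun ω => (hittingBtwn f (Set.Ici ε) 0 n ω : ℕ) with hτdef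
    have hτ : IsStoppingTime 𝒢 τ := hf.stronglyAdapted.adapted.isStoppingTime_hittingBtwn measurableSet_Ici
    have hτ_le : ∀ ω, τ ω ≤ n := fun ω => WithTop.coe_le_coe.2 (hittingBtwn_le ω)
    -- stopped value is ≥ ε on A n
    have hsv_ge : ∀ ω ∈ A n, ε ≤ stoppedValue f τ ω := by
      intro ω hω
      obtain ⟨k, hkn, hk⟩ := hω
      have : stoppedValue f τ ω ∈ Set.Ici ε := by
        exact hittingBtwn_mem_set (u := f) (s := Set.Ici ε) (n := 0)
          (m := n) (ω := ω) ⟨k, ⟨Nat.zero_le _, hkn⟩, hk⟩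
      exact this
    have hsv_int : Integrable (stoppedValue f τ) μ := by
      have := hf.neg.integrable_stoppedValue hτ hτ_le
      have heq : stoppedValue (-f) τ = -(stoppedValue f τ) := by
        funext ω; simp [stoppedValue]
      rw [heq] at this
      simpa using this.neg
    -- optional stopping for supermartingale
    have hsv_le : ∫ ω, stoppedValue f τ ω ∂μ ≤ ∫ ω, f 0 ω ∂μ := by
      have h := hf.neg.expected_stoppedValue_mono (isStoppingTime_const 𝒢 0) hτ
        (fun ω => WithTop.coe_le_coe.2 (Nat.zero_le _)) hτ_le
      have h0 : stoppedValue (-f) (fun _ => WithTop.some (0:ℕ)) = -(f 0) := by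
        funext ω; simp [stoppedValue]
      have h1 : stoppedValue (-f) τ = -(stoppedValue f τ) := by
        funext ω; simp [stoppedValue]
      rw [h0, h1] at h
      simp only [Pi.neg_apply] at h
      rw [integral_neg, integral_neg, neg_le_neg_iff] at h
      exact h
    have hset : ε * (μ (A n)).toReal ≤ ∫ ω in A n, stoppedValue f τ ω ∂μ :=
      setIntegral_ge_of_const_le_real (hAmeas n) (measure_ne_top _ _) hsv_ge hsv_int.integrableOn
    have hsub : ∫ ω in A n, stoppedValue f τ ω ∂μ ≤ ∫ ω, stoppedValue f τ ω ∂μ :=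
      setIntegral_le_integral hsv_int
        (Eventually.of_forall fun ω => hnonneg _ _)
    have htoReal : (μ (A n)).toReal ≤ (∫ ω, f 0 ω ∂μ) / ε := by
      rw [le_div_iff₀ hε]
      nlinarith [hset, hsub, hsv_le]
    calc μ (A n) = ENNReal.ofReal ((μ (A n)).toReal) :=
          (ENNReal.ofReal_toReal (measure_ne_top _ _)).symm
      _ ≤ _ := ENNReal.ofReal_le_ofReal htoReal
  have hsubset : {ω | ∃ n, ε ≤ f n ω} ⊆ ⋃ n, A n := by
    rintro ω ⟨n, hn⟩
    exact Set.mem_iUnion.2 ⟨n, n, le_rfl, hn⟩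
  calc μ {ω | ∃ n, ε ≤ f n ω} ≤ μ (⋃ n, A n) := measure_mono hsubset
    _ = ⨆ n, μ (A n) := by
        refine Directed.measure_iUnion (Monotone.directed_le ?_)
        intro a b hab ω ⟨k, hk, hke⟩
        exact ⟨k, hk.trans hab, hke⟩
    _ ≤ _ := iSup_le hkey


lemma ville_key_real {p : ℝ} (h0 : 0 ≤ p) (h1 : p ≤ 1) :
    Real.exp (p / 2) * (1 - (1 - Real.exp (-1)) * p) ≤ 1 := by
  have he : (2 : ℝ) ≤ Real.exp 1 := by
    have := Real.add_one_le_exp (1 : ℝ); linarith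
  have hinv : Real.exp (-1) ≤ 1 / 2 := by
    rw [Real.exp_neg]
    rw [inv_le_comm₀ (by positivity) (by norm_num)]
    simpa using he
  set c := 1 - Real.exp (-1) with hc
  have hc2 : 1 / 2 ≤ c := by simp [hc]; linarith
  have h2 : 1 - c * p ≤ Real.exp (-(c * p)) := by
    have := Real.add_one_le_exp (-(c * p)); linarith
  calc Real.exp (p / 2) * (1 - c * p)
      ≤ Real.exp (p / 2) * Real.exp (-(c * p)) := by
        exact mul_le_mul_of_nonneg_left h2 (Real.exp_nonneg _)
    _ = Real.exp (p / 2 - c * p) := by rw [← Real.exp_add]; ring_nf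
    _ ≤ 1 := by
        rw [Real.exp_le_one_iff]
        nlinarith


/-- Time-uniform lower-tail bound for adapted Bernoulli sums: if
`(F_i)` is a filtration, each `X_i` is `{0,1}`-valued and `F_i`-measurable, each `P_i` is
`F_{i−1}`-measurable, and `ℙ(X_i = 1 | F_{i−1}) = P_i` (i.e. `𝔼[X_i | F_{i−1}] = P_i`
a.s.), then for every real `W`,
`ℙ[∃ n ≥ 1 : ∑_{t=1}^n X_t < (1/2)∑_{t=1}^n P_t − W] ≤ e^{−W}`. -/
theorem stmt11 {Ω : Type*} {m0 : MeasurableSpace Ω} (μ : Measure Ω)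
    [IsProbabilityMeasure μ]
    (F : Filtration ℕ m0)
    (X P : ℕ → Ω → ℝ)
    (hX01 : ∀ i ω, X i ω = 0 ∨ X i ω = 1)
    (hXmeas : ∀ i, 1 ≤ i → Measurable[F i] (X i))
    (hPmeas : ∀ i, 1 ≤ i → Measurable[F (i - 1)] (P i))
    (hcond : ∀ i, 1 ≤ i → μ[X i|F (i - 1)] =ᵐ[μ] P i)
    (W : ℝ) :
    μ {ω | ∃ n, 1 ≤ n ∧
        ∑ t ∈ Finset.Icc 1 n, X t ω < (∑ t ∈ Finset.Icc 1 n, P t ω) / 2 - W}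
      ≤ ENNReal.ofReal (Real.exp (-W)) := by
  classical
  -- basic facts about X
  have hX0 : ∀ i ω, 0 ≤ X i ω := by
    intro i ω; rcases hX01 i ω with h | h <;> rw [h] <;> norm_num
  have hX1 : ∀ i ω, X i ω ≤ 1 := by
    intro i ω; rcases hX01 i ω with h | h <;> rw [h] <;> norm_num
  have hXint : ∀ i, 1 ≤ i → Integrable (X i) μ := by
    intro i hi
    refine Integrable.mono' (integrable_const (1 : ℝ))
      (((hXmeas i hi).mono (F.le i) le_rfl).stronglyMeasurable).aestronglyMeasurable
      (Eventually.of_forall fun ω => ?_)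
    rw [Real.norm_eq_abs, abs_of_nonneg (hX0 i ω)]; exact hX1 i ω
  -- a.e. bounds for P
  have hP01 : ∀ᵐ ω ∂μ, ∀ t, 1 ≤ t → 0 ≤ P t ω ∧ P t ω ≤ 1 := by
    rw [ae_all_iff]
    intro t
    by_cases ht : 1 ≤ t
    · have hnn : 0 ≤ᵐ[μ] μ[X t|F (t - 1)] :=
        condExp_nonneg (Eventually.of_forall fun ω => hX0 t ω)
      have hub : μ[X t|F (t - 1)] ≤ᵐ[μ] fun _ => (1 : ℝ) := by
        have h1 : μ[X t|F (t - 1)] ≤ᵐ[μ] μ[(fun _ => (1 : ℝ))|F (t - 1)] :=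
          condExp_mono (hXint t ht) (integrable_const _)
            (Eventually.of_forall fun ω => hX1 t ω)
        calc μ[X t|F (t - 1)] ≤ᵐ[μ] μ[(fun _ => (1 : ℝ))|F (t - 1)] := h1
          _ =ᵐ[μ] fun _ => (1 : ℝ) := by rw [condExp_const (F.le _)]
      filter_upwards [hnn, hub, hcond t ht] with ω h1 h2 h3
      intro _
      rw [← h3]
      exact ⟨h1, h2⟩
    · exact Eventually.of_forall fun ω h => absurd h ht
  -- the exponential supermartingale
  set M : ℕ → Ω → ℝ := fun n ω =>
    Real.exp ((∑ t ∈ Finset.Icc 1 n, P t ω) / 2 - ∑ t ∈ Finset.Icc 1 n, X t ω) with hM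
  have hMpos : ∀ n ω, 0 < M n ω := fun n ω => Real.exp_pos _
  -- measurability
  have hMmeas : ∀ n, Measurable[F n] (M n) := by
    intro n
    apply Measurable.exp
    apply Measurable.sub
    · apply Measurable.div_const
      apply Finset.measurable_sum
      intro t ht
      simp only [Finset.mem_Icc] at ht
      exact (hPmeas t ht.1).mono (F.mono (by omega)) le_rfl
    · apply Finset.measurable_sum
      intro t ht
      simp only [Finset.mem_Icc] at ht
      exact (hXmeas t ht.1).mono (F.mono ht.2) le_rfl
  have hMadapted : StronglyAdapted F M := fun n => (hMmeas n).stronglyMeasurable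
  -- a.e. bound on M n
  have hMbdd : ∀ n, ∀ᵐ ω ∂μ, M n ω ≤ Real.exp (n / 2) := by
    intro n
    filter_upwards [hP01] with ω hω
    apply Real.exp_le_exp.2
    have hQ : ∑ t ∈ Finset.Icc 1 n, P t ω ≤ n := by
      calc ∑ t ∈ Finset.Icc 1 n, P t ω ≤ ∑ t ∈ Finset.Icc 1 n, (1 : ℝ) :=
            Finset.sum_le_sum fun t ht => (hω t (Finset.mem_Icc.1 ht).1).2
        _ = n := by simp [Nat.card_Icc]
    have hS : 0 ≤ ∑ t ∈ Finset.Icc 1 n, X t ω :=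
      Finset.sum_nonneg fun t _ => hX0 t ω
    have : (0:ℝ) ≤ n := Nat.cast_nonneg n
    linarith
  have hMint : ∀ n, Integrable (M n) μ := by
    intro n
    refine Integrable.mono' (integrable_const (Real.exp (n / 2)))
      (((hMmeas n).mono (F.le n) le_rfl).stronglyMeasurable).aestronglyMeasurable ?_
    filter_upwards [hMbdd n] with ω hω
    rw [Real.norm_eq_abs, abs_of_pos (hMpos n ω)]; exact hω
  -- the supermartingale property
  set c : ℝ := 1 - Real.exp (-1) with hcdef
  have hsuper : Supermartingale M F μ := by
    refine supermartingale_nat hMadapted hMint fun n => ?_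
    -- decompose M (n+1) = G * E
    set G : Ω → ℝ := fun ω => M n ω * Real.exp (P (n + 1) ω / 2) with hG
    set E : Ω → ℝ := fun ω => Real.exp (-(X (n + 1) ω)) with hE
    have hdecomp : M (n + 1) = fun ω => G ω * E ω := by
      funext ω
      simp only [hM, hG, hE]
      rw [Finset.sum_Icc_succ_top (by omega : 1 ≤ n + 1),
        Finset.sum_Icc_succ_top (by omega : 1 ≤ n + 1), ← Real.exp_add, ← Real.exp_add]
      ring_nf
    -- G is F n strongly measurable, bounded
    have hn1 : (1:ℕ) ≤ n + 1 := by omega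
    have hPn : Measurable[F n] (P (n + 1)) := by
      have := hPmeas (n + 1) hn1
      simpa using this
    have hGmeas : StronglyMeasurable[F n] G :=
      ((hMmeas n).mul (hPn.div_const 2).exp).stronglyMeasurable
    have hGbdd : ∀ᵐ ω ∂μ, ‖G ω‖ ≤ Real.exp (n / 2) * Real.exp (1 / 2) := by
      filter_upwards [hMbdd n, hP01] with ω h1 h2
      rw [Real.norm_eq_abs, abs_of_pos (by positivity : 0 < G ω)]
      have hp := h2 (n + 1) hn1
      have : Real.exp (P (n + 1) ω / 2) ≤ Real.exp (1 / 2) :=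
        Real.exp_le_exp.2 (by linarith [hp.2])
      exact mul_le_mul h1 this (Real.exp_nonneg _) (Real.exp_nonneg _)
    -- E is integrable and equals 1 - c * X (n+1)
    have hEeq : E = fun ω => 1 - c * X (n + 1) ω := by
      funext ω
      simp only [hE, hcdef]
      rcases hX01 (n + 1) ω with h | h <;> rw [h] <;> simp
    have hEint : Integrable E μ := by
      rw [hEeq]
      exact (integrable_const 1).sub ((hXint (n + 1) hn1).const_mul c)
    -- pull-out property
    have hpull : μ[fun ω => G ω * E ω|F n] =ᵐ[μ] fun ω => G ω * (μ[E|F n]) ω := by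
      have := condExp_stronglyMeasurable_mul_of_bound (F.le n) hGmeas hEint
        (Real.exp (n / 2) * Real.exp (1 / 2)) hGbdd
      exact this
    -- compute μ[E | F n]
    have hcondX : μ[X (n + 1)|F n] =ᵐ[μ] P (n + 1) := by
      have := hcond (n + 1) hn1
      simpa using this
    have hcondE : μ[E|F n] =ᵐ[μ] fun ω => 1 - c * P (n + 1) ω := by
      rw [hEeq]
      have h1 : μ[fun ω => 1 - c * X (n + 1) ω|F n]
          =ᵐ[μ] μ[(fun _ => (1:ℝ))|F n] - μ[fun ω => c * X (n + 1) ω|F n] :=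
        condExp_sub (integrable_const 1) ((hXint (n + 1) hn1).const_mul c) (F n)
      have h2 : μ[fun ω => c * X (n + 1) ω|F n] =ᵐ[μ] fun ω => c * (μ[X (n + 1)|F n]) ω := by
        have := condExp_smul (μ := μ) (m := F n) c (X (n + 1))
        exact this
      filter_upwards [h1, h2, hcondX] with ω e1 e2 e3
      rw [e1]
      simp only [Pi.sub_apply, condExp_const (F.le n)]
      rw [e2, e3]
    -- conclude
    calc μ[M (n + 1)|F n] = μ[fun ω => G ω * E ω|F n] := by rw [hdecomp]
      _ ≤ᵐ[μ] M n := by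
        filter_upwards [hpull, hcondE, hP01, hcondX] with ω e1 e2 hp _
        rw [e1, e2]
        have hp1 := hp (n + 1) hn1
        have hkey := ville_key_real hp1.1 hp1.2
        have hMn : 0 ≤ M n ω := (hMpos n ω).le
        calc G ω * (1 - c * P (n + 1) ω)
            = M n ω * (Real.exp (P (n + 1) ω / 2) * (1 - c * P (n + 1) ω)) := by
              simp only [hG]; ring
          _ ≤ M n ω * 1 := by
              apply mul_le_mul_of_nonneg_left _ hMn
              simpa [hcdef] using hkey
          _ = M n ω := mul_one _
  -- ∫ M 0 = 1
  have hM0 : ∀ ω, M 0 ω = 1 := by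
    intro ω; simp [hM]
  have hint0 : ∫ ω, M 0 ω ∂μ = 1 := by
    simp only [hM0]
    simp
  -- event inclusion
  have hε : (0:ℝ) < Real.exp W := Real.exp_pos W
  have hincl : {ω | ∃ n, 1 ≤ n ∧
      ∑ t ∈ Finset.Icc 1 n, X t ω < (∑ t ∈ Finset.Icc 1 n, P t ω) / 2 - W}
      ⊆ {ω | ∃ n, Real.exp W ≤ M n ω} := by
    rintro ω ⟨n, _, hn⟩
    refine ⟨n, Real.exp_le_exp.2 ?_⟩
    linarith
  calc μ {ω | ∃ n, 1 ≤ n ∧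
        ∑ t ∈ Finset.Icc 1 n, X t ω < (∑ t ∈ Finset.Icc 1 n, P t ω) / 2 - W}
      ≤ μ {ω | ∃ n, Real.exp W ≤ M n ω} := measure_mono hincl
    _ ≤ ENNReal.ofReal ((∫ ω, M 0 ω ∂μ) / Real.exp W) :=
        ville_aux hsuper (fun n ω => (hMpos n ω).le) hε
    _ = ENNReal.ofReal (Real.exp (-W)) := by
        rw [hint0, Real.exp_neg]
        simp [one_div]
end
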